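/- arXiv:2308.11947 — 4 statements merged into one kernel-verified Lean document; each statement's English description precedes it below -/
import Mathlib

section
/- For every k ∈ ℕ, if f : ℝ → ℝ is C^k, then for all x ≠ y, the k-th partial derivative in x of (f(y)-f(x))/(y-x) equals k! (f(y) - P_k(x,y))/(y-x)^{k+1}, where P_k(x,y) = Σ_{i=0}^{k} f^{(i)}(x)(y-x)^i / i! is the k-th Taylor polynomial of f at x. -/
open Set

/-- The `k`-th Taylor polynomial of `f` centered at `x`, evaluated at `y`. -/
noncomputable def taylorPoly (f : ℝ → ℝ) (k : ℕ) (x y : ℝ) : ℝ :=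
  ∑ i ∈ Finset.range (k + 1), iteratedDeriv i f x * (y - x) ^ i / (i.factorial : ℝ)

lemma taylorPoly_eq (f : ℝ → ℝ) (k : ℕ) (x y : ℝ) :
    taylorPoly f k x y = taylorWithinEval f k Set.univ x y := by
  rw [taylorPoly, taylor_within_apply]
  refine Finset.sum_congr rfl fun i _ => ?_
  rw [iteratedDerivWithin_univ]
  simp [smul_eq_mul]
  ring

lemma taylorPoly_hasDerivAt (f : ℝ → ℝ) (k : ℕ) (x y : ℝ) (hf : ContDiff ℝ (k + 1) f) :
    HasDerivAt (fun u => taylorPoly f k u y)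
      (iteratedDeriv (k + 1) f x * (y - x) ^ k / (k.factorial : ℝ)) x := by
  have h := hasDerivWithinAt_taylorWithinEval (f := f) (x := y) (y := x) (n := k)
    (s := Set.univ) (s' := Set.univ) uniqueDiffOn_univ
    Filter.univ_mem (mem_univ x) (subset_refl _) (hf.of_le (m := k) (by exact_mod_cast Nat.le_succ k)).contDiffOn
    ?_
  · rw [hasDerivWithinAt_univ] at h
    have heq : (fun u => taylorPoly f k u y) = fun t => taylorWithinEval f k Set.univ t y := by
      funext u; exact taylorPoly_eq f k u y
    rw [heq]
    refine h.congr_deriv ?_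
    rw [iteratedDerivWithin_univ]
    simp [smul_eq_mul]
    ring
  · rw [iteratedDerivWithin_univ]
    exact (hf.differentiable_iteratedDeriv k (by exact_mod_cast Nat.lt_succ_self k) x).differentiableWithinAt

theorem iteratedDeriv_difference_quotient (k : ℕ) (f : ℝ → ℝ) (hf : ContDiff ℝ k f)
    (x y : ℝ) (hxy : x ≠ y) :
    iteratedDeriv k (fun u => (f y - f u) / (y - u)) x
      = (k.factorial : ℝ) * (f y - taylorPoly f k x y) / (y - x) ^ (k + 1) := by
  induction k generalizing x with
  | zero =>
    simp [taylorPoly]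
  | succ k ih =>
    have hyx : y - x ≠ 0 := sub_ne_zero.mpr (Ne.symm hxy)
    rw [iteratedDeriv_succ]
    have hev : (fun u => iteratedDeriv k (fun u => (f y - f u) / (y - u)) u)
        =ᶠ[nhds x] fun u => (k.factorial : ℝ) * (f y - taylorPoly f k u y) / (y - u) ^ (k + 1) := by
      filter_upwards [eventually_ne_nhds hxy] with u hu
      exact ih (hf.of_succ) u hu
    rw [Filter.EventuallyEq.deriv_eq hev]
    -- compute derivative of RHS
    have hT := taylorPoly_hasDerivAt f k x y hf
    have hnum : HasDerivAt (fun u => (k.factorial : ℝ) * (f y - taylorPoly f k u y))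
        ((k.factorial : ℝ) * (-(iteratedDeriv (k + 1) f x * (y - x) ^ k / (k.factorial : ℝ)))) x :=
      ((hT.const_sub (f y)).const_mul _)
    have hden : HasDerivAt (fun u => (y - u) ^ (k + 1)) (-(k + 1) * (y - x) ^ k) x :=
      monomial_has_deriv_aux x y k
    have hd0 : (y - x) ^ (k + 1) ≠ 0 := pow_ne_zero _ hyx
    have hdiv := hnum.div hden hd0
    rw [show (fun u => (k.factorial : ℝ) * (f y - taylorPoly f k u y) / (y - u) ^ (k + 1)) = ((fun u => (k.factorial : ℝ) * (f y - taylorPoly f k u y)) / fun u => (y - u) ^ (k + 1)) from rfl, hdiv.deriv]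
    have hfac : (k.factorial : ℝ) ≠ 0 := Nat.cast_ne_zero.mpr (Nat.factorial_ne_zero k)
    have hTsucc : taylorPoly f (k + 1) x y
        = taylorPoly f k x y + iteratedDeriv (k + 1) f x * (y - x) ^ (k + 1) / ((k + 1).factorial : ℝ) := by
      rw [taylorPoly, taylorPoly, Finset.sum_range_succ]
    rw [hTsucc, Nat.factorial_succ]
    push_cast
    field_simp
    ring
end

section
/- If f ∈ C^{0,α}([a,b]) with 0 < α < 1, then for any x₁, x₂ ∈ [a,b] with x₁ ≠ x₂, |Tf(x₂) - Tf(x₁)| ≤ C ‖f‖_{C^{0,α}} |x₂-x₁|^α (ln|(b-a)/(x₂-x₁)| + 1), where C depends only on α. In particular Tf ∈ C^{0,α₀}([a,b]) for every 0 < α₀ < α. -/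
open Set Filter intervalIntegral

open MeasureTheory


lemma right_piece {φ : ℝ → ℝ} {s r : ℝ} (hsr : s ≤ r)
    (hφ : IntervalIntegrable φ volume s r) (c : ℝ) :
    IntegrableOn (fun y => φ (y - c)) (Icc (c + s) (c + r)) volume := by
  have h := hφ.comp_sub_right c
  rw [intervalIntegrable_iff_integrableOn_Icc_of_le (by linarith)] at h
  simpa [add_comm] using h

lemma left_piece {φ : ℝ → ℝ} {s r : ℝ} (hsr : s ≤ r)
    (hφ : IntervalIntegrable φ volume s r) (c : ℝ) :
    IntegrableOn (fun y => φ (c - y)) (Icc (c - r) (c - s)) volume := by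
  have h := (hφ.comp_sub_left c).symm
  rw [intervalIntegrable_iff_integrableOn_Icc_of_le (by linarith)] at h
  exact h

/-- The function `y ↦ φ |y - c|` on an annulus around `c`. -/
lemma ann_integrable {φ : ℝ → ℝ} {s r : ℝ} (h0 : 0 ≤ s) (hsr : s ≤ r)
    (hφ : IntervalIntegrable φ volume s r) (c : ℝ) :
    IntegrableOn (fun y => φ |y - c|) (Icc (c - r) (c - s) ∪ Icc (c + s) (c + r)) volume := by
  apply IntegrableOn.union
  · apply ((left_piece hsr hφ c).congr_fun _ measurableSet_Icc)
    intro y hy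
    have : |y - c| = c - y := by
      rw [abs_of_nonpos (by simp only [mem_Icc] at hy; linarith)]; ring
    simp [this]
  · apply ((right_piece hsr hφ c).congr_fun _ measurableSet_Icc)
    intro y hy
    have : |y - c| = y - c :=
      abs_of_nonneg (by simp only [mem_Icc] at hy; linarith)
    simp [this]

lemma ann_integral {φ : ℝ → ℝ} {s r : ℝ} (h0 : 0 ≤ s) (hsr : s ≤ r)
    (hφ : IntervalIntegrable φ volume s r) (c : ℝ) :
    ∫ y in Icc (c - r) (c - s) ∪ Icc (c + s) (c + r), φ |y - c| = 2 * ∫ t in s..r, φ t := by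
  have hdisj : AEDisjoint volume (Icc (c - r) (c - s)) (Icc (c + s) (c + r)) := by
    apply measure_mono_null (t := {c - s})
    · rintro y ⟨⟨h1, h2⟩, h3, h4⟩
      simp only [mem_singleton_iff]
      linarith
    · exact measure_singleton _
  have hL : IntegrableOn (fun y => φ |y - c|) (Icc (c - r) (c - s)) volume :=
    (ann_integrable h0 hsr hφ c).mono_set subset_union_left
  have hR : IntegrableOn (fun y => φ |y - c|) (Icc (c + s) (c + r)) volume :=
    (ann_integrable h0 hsr hφ c).mono_set subset_union_right
  rw [integral_union_ae hdisj measurableSet_Icc.nullMeasurableSet hL hR]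
  have hLv : ∫ y in Icc (c - r) (c - s), φ |y - c| = ∫ t in s..r, φ t := by
    rw [setIntegral_congr_fun measurableSet_Icc (g := fun y => φ (c - y))
      (fun y hy => by
        have : |y - c| = c - y := by
          rw [abs_of_nonpos (by simp only [mem_Icc] at hy; linarith)]; ring
        simp [this])]
    rw [integral_Icc_eq_integral_Ioc, ← intervalIntegral.integral_of_le (by linarith : c - r ≤ c - s)]
    rw [intervalIntegral.integral_comp_sub_left φ c]
    norm_num
  have hRv : ∫ y in Icc (c + s) (c + r), φ |y - c| = ∫ t in s..r, φ t := by
    rw [setIntegral_congr_fun measurableSet_Icc (g := fun y => φ (y - c))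
      (fun y hy => by
        have : |y - c| = y - c := abs_of_nonneg (by simp only [mem_Icc] at hy; linarith)
        simp [this])]
    rw [integral_Icc_eq_integral_Ioc, ← intervalIntegral.integral_of_le (by linarith : c + s ≤ c + r)]
    rw [intervalIntegral.integral_comp_sub_right φ c]
    norm_num
  rw [hLv, hRv]; ring

lemma integrableOn_abs_rpow {β : ℝ} (hβ : -1 < β) (c u v : ℝ) :
    IntegrableOn (fun y => |y - c| ^ β) (Icc u v) volume := by
  set R := |u - c| + |v - c| with hR
  have hR0 : 0 ≤ R := by positivity
  have h := ann_integrable (φ := fun t => t ^ β) le_rfl hR0 (intervalIntegrable_rpow' hβ) c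
  apply h.mono_set
  intro y hy
  simp only [mem_Icc] at hy
  have hu : -(|u - c|) ≤ u - c := neg_abs_le _
  have hv : v - c ≤ |v - c| := le_abs_self _
  have h1 : c - R ≤ y := by have := abs_nonneg (v - c); linarith [hy.1]
  have h2 : y ≤ c + R := by have := abs_nonneg (u - c); linarith [hy.2]
  rcases le_total y c with h | h
  · exact Or.inl ⟨h1, by simpa using h⟩
  · exact Or.inr ⟨by simpa using h, h2⟩

lemma abs_rpow_ball_integral {β : ℝ} (hβ : -1 < β) (c r : ℝ) (hr : 0 ≤ r) :
    ∫ y in Icc (c - r) (c + r), |y - c| ^ β = 2 * (r ^ (β + 1) / (β + 1)) := by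
  have h := ann_integral (φ := fun t => t ^ β) le_rfl hr (intervalIntegrable_rpow' hβ) c
  simp only [sub_zero, add_zero] at h
  rw [Icc_union_Icc_eq_Icc (by linarith) (by linarith)] at h
  rw [h, integral_rpow (Or.inl hβ), Real.zero_rpow (by linarith : β + 1 ≠ 0)]
  ring

lemma holder_continuousOn {a b M α : ℝ} {f : ℝ → ℝ} (hα : 0 < α)
    (hf : ∀ x ∈ Icc a b, ∀ y ∈ Icc a b, |f x - f y| ≤ M * |x - y| ^ α) :
    ContinuousOn f (Icc a b) := by
  intro x hx
  rw [ContinuousWithinAt, tendsto_iff_dist_tendsto_zero]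
  have hb : Filter.Tendsto (fun y : ℝ => M * |y - x| ^ α) (nhdsWithin x (Icc a b)) (nhds 0) := by
    have h1 : Filter.Tendsto (fun y : ℝ => |y - x|) (nhdsWithin x (Icc a b)) (nhds 0) := by
      have hc : Continuous (fun y : ℝ => |y - x|) := (continuous_id.sub continuous_const).abs
      have : Filter.Tendsto (fun y : ℝ => |y - x|) (nhds x) (nhds 0) := by
        have := hc.tendsto x
        simpa using this
      exact this.mono_left nhdsWithin_le_nhds
    have h2 : Filter.Tendsto (fun t : ℝ => M * t ^ α) (nhds 0) (nhds (M * (0:ℝ) ^ α)) := by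
      exact (Filter.Tendsto.const_mul M ((Real.continuousAt_rpow_const 0 α (Or.inr hα.le)).tendsto))
    have := h2.comp h1
    simpa [Function.comp_def, Real.zero_rpow hα.ne'] using this
  apply squeeze_zero' _ _ hb
  · filter_upwards [self_mem_nhdsWithin] with y hy
    exact dist_nonneg
  · filter_upwards [self_mem_nhdsWithin] with y hy
    rw [Real.dist_eq]
    exact hf y hy x hx

lemma g_integrableOn {a b M α : ℝ} {f : ℝ → ℝ} (hα : 0 < α) (hα1 : α < 1) (hab : a < b)
    (hf : ∀ x ∈ Icc a b, ∀ y ∈ Icc a b, |f x - f y| ≤ M * |x - y| ^ α)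
    {x : ℝ} (hx : x ∈ Icc a b) :
    IntegrableOn (fun y => (f y - f x) / (y - x)) (Ioc a b) volume := by
  have hcont := holder_continuousOn hα hf
  set g := fun y => (f y - f x) / (y - x) with hg
  have hmeas : AEStronglyMeasurable g (volume.restrict (Ioc a b)) := by
    have hconts : ContinuousOn g (Icc a b \ {x}) := by
      apply ContinuousOn.div
      · exact (hcont.mono diff_subset).sub continuousOn_const
      · exact (continuous_id.sub continuous_const).continuousOn
      · intro y hy
        exact sub_ne_zero.mpr hy.2
    have h1 : AEStronglyMeasurable g (volume.restrict (Icc a b \ {x})) :=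
      hconts.aestronglyMeasurable (measurableSet_Icc.diff (measurableSet_singleton x))
    apply h1.mono_measure
    apply Measure.restrict_mono_ae
    have hnull : (volume : Measure ℝ) {x} = 0 := measure_singleton x
    unfold Filter.EventuallyLE
    filter_upwards [measure_eq_zero_iff_ae_notMem.mp hnull] with y hy
    intro hyIoc
    exact ⟨⟨le_of_lt hyIoc.1, hyIoc.2⟩, hy⟩
  have hx_ae : ∀ᵐ (y : ℝ) ∂(volume.restrict (Ioc a b)), y ≠ x := by
    have hz : (volume.restrict (Ioc a b)) {x} = 0 :=
      le_antisymm ((Measure.restrict_le_self (s := Ioc a b)) {x} |>.trans_eq (measure_singleton x))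
        (by simp)
    rw [MeasureTheory.ae_iff]
    convert hz using 2
    ext y; simp
  have hmaj : IntegrableOn (fun y => M * |y - x| ^ (α - 1)) (Ioc a b) volume :=
    ((integrableOn_abs_rpow (show (-1:ℝ) < α - 1 by linarith) x a b).mono_set
      Ioc_subset_Icc_self).const_mul M
  apply Integrable.mono' hmaj hmeas
  filter_upwards [ae_restrict_mem measurableSet_Ioc, hx_ae] with y hy hyx
  have hpos : 0 < |y - x| := abs_pos.mpr (sub_ne_zero.mpr hyx)
  have hfb : |f y - f x| ≤ M * |y - x| ^ α := hf y ⟨hy.1.le, hy.2⟩ x hx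
  have : ‖g y‖ = |f y - f x| / |y - x| := by
    rw [Real.norm_eq_abs, hg, abs_div]
  rw [this]
  calc |f y - f x| / |y - x| ≤ (M * |y - x| ^ α) / |y - x| := by gcongr
    _ = M * |y - x| ^ (α - 1) := by
        rw [Real.rpow_sub hpos, Real.rpow_one]; ring

lemma ae_ne_restrict (s : Set ℝ) (x : ℝ) : ∀ᵐ (y : ℝ) ∂(volume.restrict s), y ≠ x := by
  have hz : (volume.restrict s) {x} = 0 :=
    le_antisymm ((Measure.restrict_le_self (s := s)) {x} |>.trans_eq (measure_singleton x))
      (by simp)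
  rw [MeasureTheory.ae_iff]
  convert hz using 2
  ext y; simp

lemma g_abs_le {a b M α : ℝ} {f : ℝ → ℝ}
    (hf : ∀ x ∈ Icc a b, ∀ y ∈ Icc a b, |f x - f y| ≤ M * |x - y| ^ α)
    {x y : ℝ} (hx : x ∈ Icc a b) (hy : y ∈ Icc a b) (hne : y ≠ x) :
    |(f y - f x) / (y - x)| ≤ M * |y - x| ^ (α - 1) := by
  have hpos : 0 < |y - x| := abs_pos.mpr (sub_ne_zero.mpr hne)
  have hfb : |f y - f x| ≤ M * |y - x| ^ α := hf y hy x hx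
  rw [abs_div]
  calc |f y - f x| / |y - x| ≤ (M * |y - x| ^ α) / |y - x| := by gcongr
    _ = M * |y - x| ^ (α - 1) := by
        rw [Real.rpow_sub hpos, Real.rpow_one]; ring

/-- The operator `T`: `Tf(x) = ∫_a^b (f(y)-f(x))/(y-x) dy`. -/
noncomputable def Thilb (a b : ℝ) (f : ℝ → ℝ) (x : ℝ) : ℝ :=
  ∫ y in a..b, (f y - f x) / (y - x)

set_option maxHeartbeats 2000000 in
lemma core {α : ℝ} (hα : 0 < α) (hα1 : α < 1) {a b : ℝ} (hab : a < b)
    {f : ℝ → ℝ} {M : ℝ} (hM : 0 ≤ M)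
    (hf : ∀ x ∈ Icc a b, ∀ y ∈ Icc a b, |f x - f y| ≤ M * |x - y| ^ α)
    {x₁ : ℝ} (h1 : x₁ ∈ Icc a b) {x₂ : ℝ} (h2 : x₂ ∈ Icc a b) (hne : x₁ ≠ x₂) :
    |Thilb a b f x₂ - Thilb a b f x₁|
      ≤ (12/α + 4/(1-α) + 2) * M * |x₂ - x₁| ^ α * (Real.log ((b - a) / |x₂ - x₁|) + 1) := by
  set δ := |x₂ - x₁| with hδdef
  set L := b - a with hLdef
  have hδ : 0 < δ := abs_pos.mpr (sub_ne_zero.mpr (Ne.symm hne))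
  have hL : 0 < L := by simp [hLdef]; linarith
  have hδL : δ ≤ L := by
    rw [hδdef, abs_le]
    obtain ⟨ha1, hb1⟩ := h1; obtain ⟨ha2, hb2⟩ := h2
    constructor <;> simp [hLdef] <;> linarith
  set g₁ := fun y => (f y - f x₁) / (y - x₁) with hg1
  set g₂ := fun y => (f y - f x₂) / (y - x₂) with hg2
  have hI1 : IntegrableOn g₁ (Ioc a b) volume := g_integrableOn hα hα1 hab hf h1
  have hI2 : IntegrableOn g₂ (Ioc a b) volume := g_integrableOn hα hα1 hab hf h2
  have hT : Thilb a b f x₂ - Thilb a b f x₁ = ∫ y in Ioc a b, (g₂ y - g₁ y) := by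
    unfold Thilb
    rw [intervalIntegral.integral_of_le hab.le, intervalIntegral.integral_of_le hab.le,
      ← integral_sub hI2 hI1]
  set S := Ioc a b ∩ {y | |y - x₁| ≤ 2*δ} with hSdef
  set Tst := Ioc a b ∩ {y | 2*δ < |y - x₁|} with hTdef
  have hmS : MeasurableSet S :=
    measurableSet_Ioc.inter ((isClosed_le (by continuity) continuous_const).measurableSet)
  have hmT : MeasurableSet Tst :=
    measurableSet_Ioc.inter ((isOpen_lt continuous_const (by continuity)).measurableSet)
  have hsplit : Ioc a b = S ∪ Tst := by
    rw [hSdef, hTdef, ← inter_union_distrib_left]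
    have : {y : ℝ | |y - x₁| ≤ 2*δ} ∪ {y : ℝ | 2*δ < |y - x₁|} = univ := by
      ext y; simp [le_or_gt]
    rw [this, inter_univ]
  have hdisj : Disjoint S Tst := by
    apply Set.disjoint_left.mpr
    rintro y ⟨-, hy1⟩ ⟨-, hy2⟩
    simp only [mem_setOf_eq] at hy1 hy2
    linarith
  set D := fun y => |g₂ y - g₁ y| with hDdef
  have hDint : IntegrableOn D (Ioc a b) volume := (hI2.sub hI1).abs
  have step0 : |Thilb a b f x₂ - Thilb a b f x₁| ≤ (∫ y in S, D y) + ∫ y in Tst, D y := by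
    rw [hT]
    calc |∫ y in Ioc a b, (g₂ y - g₁ y)| ≤ ∫ y in Ioc a b, D y := by
          simpa [hDdef, Real.norm_eq_abs] using
            norm_integral_le_integral_norm (μ := volume.restrict (Ioc a b)) (fun y => g₂ y - g₁ y)
      _ = (∫ y in S, D y) + ∫ y in Tst, D y := by
          rw [show Ioc a b = S ∪ Tst from hsplit]
          exact MeasureTheory.setIntegral_union hdisj hmT
            (hDint.mono_set (hsplit ▸ subset_union_left))
            (hDint.mono_set (hsplit ▸ subset_union_right))
  have hnear : ∫ y in S, D y ≤ 10/α * M * δ ^ α := by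
    have hβ : (-1:ℝ) < α - 1 := by linarith
    have hα0 : α - 1 + 1 = α := by ring
    set m₂ := fun y => M * |y - x₂| ^ (α - 1) with hm2def
    set m₁ := fun y => M * |y - x₁| ^ (α - 1) with hm1def
    have hS_sub : S ⊆ Icc a b := inter_subset_left.trans Ioc_subset_Icc_self
    have base2 : IntegrableOn m₂ (Icc a b) volume := (integrableOn_abs_rpow hβ x₂ a b).const_mul M
    have base1 : IntegrableOn m₁ (Icc a b) volume := (integrableOn_abs_rpow hβ x₁ a b).const_mul M
    have hm2 : IntegrableOn m₂ S volume := base2.mono_set hS_sub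
    have hm1 : IntegrableOn m₁ S volume := base1.mono_set hS_sub
    have step1 : ∫ y in S, D y ≤ ∫ y in S, (m₂ y + m₁ y) := by
      apply setIntegral_mono_ae_restrict (hDint.mono_set inter_subset_left) (hm2.add hm1)
      filter_upwards [ae_restrict_mem hmS, ae_ne_restrict S x₁, ae_ne_restrict S x₂]
        with y hyS hy1 hy2
      have hyab : y ∈ Icc a b := hS_sub hyS
      have b2 : |g₂ y| ≤ m₂ y := g_abs_le hf h2 hyab hy2
      have b1 : |g₁ y| ≤ m₁ y := g_abs_le hf h1 hyab hy1
      calc D y ≤ |g₂ y| + |g₁ y| := abs_sub _ _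
        _ ≤ m₂ y + m₁ y := add_le_add b2 b1
    have step2 : ∫ y in S, (m₂ y + m₁ y) = (∫ y in S, m₂ y) + ∫ y in S, m₁ y :=
      integral_add hm2 hm1
    have hsub2 : S ⊆ Icc (x₂ - 3*δ) (x₂ + 3*δ) := by
      rintro y ⟨hyIoc, hy⟩
      simp only [mem_setOf_eq] at hy
      have h12 : |x₁ - x₂| = δ := by rw [hδdef, abs_sub_comm]
      have hb : |y - x₂| ≤ 3*δ := by
        calc |y - x₂| ≤ |y - x₁| + |x₁ - x₂| := abs_sub_le y x₁ x₂
          _ ≤ 2*δ + δ := add_le_add hy (le_of_eq h12)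
          _ = 3*δ := by ring
      rw [abs_le] at hb
      exact ⟨by linarith [hb.1], by linarith [hb.2]⟩
    have hsub1 : S ⊆ Icc (x₁ - 2*δ) (x₁ + 2*δ) := by
      rintro y ⟨hyIoc, hy⟩
      simp only [mem_setOf_eq] at hy
      rw [abs_le] at hy
      exact ⟨by linarith [hy.1], by linarith [hy.2]⟩
    have v2 : ∫ y in Icc (x₂ - 3*δ) (x₂ + 3*δ), m₂ y = M * (2 * ((3*δ) ^ α / α)) := by
      rw [hm2def, MeasureTheory.integral_const_mul,
        abs_rpow_ball_integral hβ x₂ (3*δ) (by linarith), hα0]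
    have v1 : ∫ y in Icc (x₁ - 2*δ) (x₁ + 2*δ), m₁ y = M * (2 * ((2*δ) ^ α / α)) := by
      rw [hm1def, MeasureTheory.integral_const_mul,
        abs_rpow_ball_integral hβ x₁ (2*δ) (by linarith), hα0]
    have m2bound : ∫ y in S, m₂ y ≤ M * (2 * ((3*δ) ^ α / α)) := by
      rw [← v2]
      apply setIntegral_mono_set ((integrableOn_abs_rpow hβ x₂ _ _).const_mul M)
        (Filter.Eventually.of_forall fun y => by
          simp only [hm2def]
          positivity)
        hsub2.eventuallyLE
    have m1bound : ∫ y in S, m₁ y ≤ M * (2 * ((2*δ) ^ α / α)) := by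
      rw [← v1]
      apply setIntegral_mono_set ((integrableOn_abs_rpow hβ x₁ _ _).const_mul M)
        (Filter.Eventually.of_forall fun y => by
          simp only [hm1def]
          positivity)
        hsub1.eventuallyLE
    have c3 : (3*δ) ^ α ≤ 3 * δ ^ α := by
      rw [Real.mul_rpow (by norm_num) hδ.le]
      gcongr
      calc (3:ℝ) ^ α ≤ 3 ^ (1:ℝ) := Real.rpow_le_rpow_of_exponent_le (by norm_num) hα1.le
        _ = 3 := Real.rpow_one 3
    have c2 : (2*δ) ^ α ≤ 2 * δ ^ α := by
      rw [Real.mul_rpow (by norm_num) hδ.le]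
      gcongr
      calc (2:ℝ) ^ α ≤ 2 ^ (1:ℝ) := Real.rpow_le_rpow_of_exponent_le (by norm_num) hα1.le
        _ = 2 := Real.rpow_one 2
    have e1 : M * (2 * ((3 * δ ^ α) / α)) + M * (2 * ((2 * δ ^ α) / α)) = 10/α * M * δ ^ α := by
      field_simp
      ring
    calc ∫ y in S, D y ≤ ∫ y in S, (m₂ y + m₁ y) := step1
      _ = (∫ y in S, m₂ y) + ∫ y in S, m₁ y := step2
      _ ≤ M * (2 * ((3*δ) ^ α / α)) + M * (2 * ((2*δ) ^ α / α)) := add_le_add m2bound m1bound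
      _ ≤ M * (2 * ((3 * δ ^ α) / α)) + M * (2 * ((2 * δ ^ α) / α)) := by gcongr
      _ = 10/α * M * δ ^ α := e1
  have hfar : ∫ y in Tst, D y ≤ 2 * M * δ ^ α * Real.log (L / δ) + 4/(1-α) * M * δ ^ α := by
    have hα2 : (0:ℝ) < 1 - α := by linarith
    set R := L + 2*δ with hRdef
    have hR2δ : 2*δ ≤ R := by simp only [hRdef]; linarith
    have hRpos : 0 < R := by simp only [hRdef]; linarith
    set A₂ := Icc (x₂ - L) (x₂ - δ) ∪ Icc (x₂ + δ) (x₂ + L) with hA2def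
    set A₁ := Icc (x₁ - R) (x₁ - 2*δ) ∪ Icc (x₁ + 2*δ) (x₁ + R) with hA1def
    have hφ₂ : IntervalIntegrable (fun t : ℝ => t⁻¹) volume δ L := by
      apply ContinuousOn.intervalIntegrable
      apply continuousOn_inv₀.mono
      intro t ht
      rw [uIcc_of_le hδL] at ht
      exact fun h0 => by rw [h0] at ht; exact absurd ht.1 (by linarith)
    have hφ₁ : IntervalIntegrable (fun t : ℝ => t ^ (α - 2)) volume (2*δ) R := by
      apply ContinuousOn.intervalIntegrable
      intro t ht
      rw [uIcc_of_le hR2δ] at ht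
      exact (Real.continuousAt_rpow_const t (α - 2)
        (Or.inl (by intro h0; rw [h0] at ht; exact absurd ht.1 (by linarith)))).continuousWithinAt
    have hint2A : IntegrableOn (fun y => |y - x₂|⁻¹) A₂ volume :=
      ann_integrable hδ.le hδL hφ₂ x₂
    have hint1A : IntegrableOn (fun y => |y - x₁| ^ (α - 2)) A₁ volume :=
      ann_integrable (by positivity) hR2δ hφ₁ x₁
    have habs2 : ∀ y ∈ Tst, δ < |y - x₂| ∧ |y - x₂| ≤ L := by
      rintro y ⟨hyIoc, hy⟩
      simp only [mem_setOf_eq] at hy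
      have h21 : |x₂ - x₁| = δ := rfl
      have htri : |y - x₁| ≤ |y - x₂| + |x₂ - x₁| := abs_sub_le y x₂ x₁
      have hyL : |y - x₂| ≤ L := by
        rw [abs_le]
        obtain ⟨hc, hd⟩ := h2
        constructor <;> simp only [hLdef] <;> [linarith [hyIoc.1.le, hyIoc.2]; linarith [hyIoc.1.le, hyIoc.2]]
      exact ⟨by linarith [htri, hy], hyL⟩
    have habs1 : ∀ y ∈ Tst, 2*δ < |y - x₁| ∧ |y - x₁| ≤ R := by
      rintro y ⟨hyIoc, hy⟩
      simp only [mem_setOf_eq] at hy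
      have hyL : |y - x₁| ≤ L := by
        rw [abs_le]
        obtain ⟨hc, hd⟩ := h1
        constructor <;> simp only [hLdef] <;> [linarith [hyIoc.1.le, hyIoc.2]; linarith [hyIoc.1.le, hyIoc.2]]
      exact ⟨hy, by simp only [hRdef]; linarith⟩
    have hTsub2 : Tst ⊆ A₂ := by
      intro y hyT
      obtain ⟨hgt, hle⟩ := habs2 y hyT
      rcases le_total y x₂ with hc | hc
      · left
        rw [abs_of_nonpos (by linarith)] at hgt hle
        exact ⟨by linarith, by linarith⟩
      · right
        rw [abs_of_nonneg (by linarith)] at hgt hle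
        exact ⟨by linarith, by linarith⟩
    have hTsub1 : Tst ⊆ A₁ := by
      intro y hyT
      obtain ⟨hgt, hle⟩ := habs1 y hyT
      rcases le_total y x₁ with hc | hc
      · left
        rw [abs_of_nonpos (by linarith)] at hgt hle
        exact ⟨by linarith, by linarith⟩
      · right
        rw [abs_of_nonneg (by linarith)] at hgt hle
        exact ⟨by linarith, by linarith⟩
    have int2T : IntegrableOn (fun y => |y - x₂|⁻¹) Tst volume := hint2A.mono_set hTsub2
    have int1T : IntegrableOn (fun y => |y - x₁| ^ (α - 2)) Tst volume := hint1A.mono_set hTsub1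
    set maj := fun y => M * δ ^ α * |y - x₂|⁻¹ + 2*M*δ * |y - x₁| ^ (α - 2) with hmajdef
    have hc2T : IntegrableOn (fun y => M * δ ^ α * |y - x₂|⁻¹) Tst volume := int2T.const_mul _
    have hc1T : IntegrableOn (fun y => 2*M*δ * |y - x₁| ^ (α - 2)) Tst volume := int1T.const_mul _
    have hmajT : IntegrableOn maj Tst volume := hc2T.add hc1T
    have pointwise : ∀ y ∈ Tst, D y ≤ maj y := by
      intro y hyT
      obtain ⟨hgt1, hle1⟩ := habs1 y hyT
      obtain ⟨hgt2, hle2⟩ := habs2 y hyT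
      obtain ⟨hyIoc, -⟩ := hyT
      have hyab : y ∈ Icc a b := Ioc_subset_Icc_self hyIoc
      have h1pos : 0 < |y - x₁| := by linarith [hδ]
      have h2pos : 0 < |y - x₂| := by linarith [hδ]
      have d1 : y - x₁ ≠ 0 := abs_pos.mp h1pos
      have d2 : y - x₂ ≠ 0 := abs_pos.mp h2pos
      have hyhalf : |y - x₁| / 2 ≤ |y - x₂| := by
        have htri : |y - x₁| ≤ |y - x₂| + |x₂ - x₁| := abs_sub_le y x₂ x₁
        have h21 : |x₂ - x₁| = δ := rfl
        linarith [htri]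
      have iden : g₂ y - g₁ y
          = (f x₁ - f x₂)/(y - x₂) + (f y - f x₁) * (x₂ - x₁)/((y - x₂)*(y - x₁)) := by
        show (f y - f x₂)/(y - x₂) - (f y - f x₁)/(y - x₁)
          = (f x₁ - f x₂)/(y - x₂) + (f y - f x₁) * (x₂ - x₁)/((y - x₂)*(y - x₁))
        field_simp
        ring
      have habsle : D y ≤ |(f x₁ - f x₂)/(y - x₂)|
          + |(f y - f x₁) * (x₂ - x₁)/((y - x₂)*(y - x₁))| := by
        show |g₂ y - g₁ y| ≤ _
        rw [iden]
        exact abs_add_le _ _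
      have term1 : |(f x₁ - f x₂)/(y - x₂)| ≤ M * δ ^ α * |y - x₂|⁻¹ := by
        rw [abs_div, div_eq_mul_inv]
        have hfb : |f x₁ - f x₂| ≤ M * δ ^ α := by
          have := hf x₁ h1 x₂ h2
          rwa [show |x₁ - x₂| = δ from by rw [hδdef, abs_sub_comm]] at this
        gcongr
      have hpow : |y - x₁| ^ (α - 2) = |y - x₁| ^ α / (|y - x₁| * |y - x₁|) := by
        rw [Real.rpow_sub h1pos]
        congr 1
        rw [show (2:ℝ) = ((2:ℕ):ℝ) by norm_num, Real.rpow_natCast]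
        ring
      have term2 : |(f y - f x₁) * (x₂ - x₁)/((y - x₂)*(y - x₁))|
          ≤ 2*M*δ * |y - x₁| ^ (α - 2) := by
        rw [abs_div, abs_mul, abs_mul]
        have hfb : |f y - f x₁| ≤ M * |y - x₁| ^ α := hf y hyab x₁ h1
        have h21 : |x₂ - x₁| = δ := rfl
        rw [h21]
        have hden : |y - x₁| / 2 * |y - x₁| ≤ |y - x₂| * |y - x₁| := by
          gcongr
        calc |f y - f x₁| * δ / (|y - x₂| * |y - x₁|)
            ≤ (M * |y - x₁| ^ α) * δ / (|y - x₁| / 2 * |y - x₁|) := by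
              apply div_le_div₀ (by positivity)
                (mul_le_mul_of_nonneg_right hfb hδ.le) (by positivity) hden
          _ = 2*M*δ * |y - x₁| ^ (α - 2) := by
              rw [hpow]
              field_simp
      calc D y ≤ _ := habsle
        _ ≤ M * δ ^ α * |y - x₂|⁻¹ + 2*M*δ * |y - x₁| ^ (α - 2) := add_le_add term1 term2
        _ = maj y := rfl
    have stepT1 : ∫ y in Tst, D y ≤ ∫ y in Tst, maj y :=
      setIntegral_mono_on (hDint.mono_set inter_subset_left) hmajT hmT pointwise
    have stepT2 : ∫ y in Tst, maj y
        = M * δ ^ α * (∫ y in Tst, |y - x₂|⁻¹) + 2*M*δ * ∫ y in Tst, |y - x₁| ^ (α - 2) := by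
      rw [hmajdef, integral_add hc2T hc1T, MeasureTheory.integral_const_mul,
        MeasureTheory.integral_const_mul]
    have inv_bound : ∫ y in Tst, |y - x₂|⁻¹ ≤ 2 * Real.log (L / δ) := by
      have hval : ∫ y in A₂, |y - x₂|⁻¹ = 2 * Real.log (L / δ) := by
        have := ann_integral (φ := fun t : ℝ => t⁻¹) hδ.le hδL hφ₂ x₂
        rw [this, integral_inv_of_pos hδ hL]
      rw [← hval]
      exact setIntegral_mono_set hint2A
        (Filter.Eventually.of_forall fun y => by positivity) hTsub2.eventuallyLE
    have pow_bound : ∫ y in Tst, |y - x₁| ^ (α - 2) ≤ 2 * ((2*δ) ^ (α - 1) / (1 - α)) := by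
      have hval : ∫ y in A₁, |y - x₁| ^ (α - 2)
          = 2 * ((R ^ (α - 1) - (2*δ) ^ (α - 1)) / (α - 1)) := by
        have h0 := ann_integral (φ := fun t : ℝ => t ^ (α - 2)) (by positivity) hR2δ hφ₁ x₁
        rw [h0, integral_rpow (Or.inr ⟨by intro h; exact absurd (by linarith : α = 1) (by linarith [hα1] : α ≠ 1),
          by
            intro hmem
            rw [uIcc_of_le hR2δ] at hmem
            exact absurd hmem.1 (by linarith)⟩)]
        rw [show α - 2 + 1 = α - 1 from by ring]
      have hmono : ∫ y in Tst, |y - x₁| ^ (α - 2) ≤ ∫ y in A₁, |y - x₁| ^ (α - 2) :=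
        setIntegral_mono_set hint1A
          (Filter.Eventually.of_forall fun y => Real.rpow_nonneg (abs_nonneg _) _) hTsub1.eventuallyLE
      have hRα : 0 ≤ R ^ (α - 1) := Real.rpow_nonneg hRpos.le _
      have heq : (R ^ (α - 1) - (2*δ) ^ (α - 1)) / (α - 1)
          = ((2*δ) ^ (α - 1) - R ^ (α - 1)) / (1 - α) := by
        rw [div_eq_div_iff (by linarith) (by linarith)]
        ring
      calc ∫ y in Tst, |y - x₁| ^ (α - 2) ≤ _ := hmono
        _ = 2 * ((R ^ (α - 1) - (2*δ) ^ (α - 1)) / (α - 1)) := hval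
        _ = 2 * (((2*δ) ^ (α - 1) - R ^ (α - 1)) / (1 - α)) := by rw [heq]
        _ ≤ 2 * ((2*δ) ^ (α - 1) / (1 - α)) := by
            gcongr
            · linarith
    have hδpow : δ * (2*δ) ^ (α - 1) ≤ δ ^ α := by
      rw [Real.mul_rpow (by norm_num) hδ.le]
      have h2a : (2:ℝ) ^ (α - 1) ≤ 1 :=
        Real.rpow_le_one_of_one_le_of_nonpos (by norm_num) (by linarith)
      have hδ1 : δ * δ ^ (α - 1) = δ ^ α := by
        nth_rewrite 1 [← Real.rpow_one δ]
        rw [← Real.rpow_add hδ]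
        norm_num
      calc δ * (2 ^ (α - 1) * δ ^ (α - 1)) = 2 ^ (α - 1) * (δ * δ ^ (α - 1)) := by ring
        _ ≤ 1 * (δ * δ ^ (α - 1)) := by
            gcongr
        _ = δ ^ α := by rw [one_mul, hδ1]
    calc ∫ y in Tst, D y ≤ ∫ y in Tst, maj y := stepT1
      _ = M * δ ^ α * (∫ y in Tst, |y - x₂|⁻¹) + 2*M*δ * ∫ y in Tst, |y - x₁| ^ (α - 2) := stepT2
      _ ≤ M * δ ^ α * (2 * Real.log (L / δ)) + 2*M*δ * (2 * ((2*δ) ^ (α - 1) / (1 - α))) := by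
          gcongr
      _ = 2 * M * δ ^ α * Real.log (L / δ) + (4*M/(1-α)) * (δ * (2*δ) ^ (α - 1)) := by
          field_simp
          ring
      _ ≤ 2 * M * δ ^ α * Real.log (L / δ) + (4*M/(1-α)) * δ ^ α := by
          gcongr
      _ = 2 * M * δ ^ α * Real.log (L / δ) + 4/(1-α) * M * δ ^ α := by ring
  have hlog : 0 ≤ Real.log (L / δ) := Real.log_nonneg ((one_le_div hδ).mpr hδL)
  have hδα : 0 ≤ δ ^ α := Real.rpow_nonneg hδ.le α
  have hα' : 0 < 1 - α := by linarith
  have hP : 0 ≤ M * δ ^ α := mul_nonneg hM hδα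
  have hKP : 0 ≤ M * δ ^ α * Real.log (L / δ) := mul_nonneg hP hlog
  refine step0.trans ?_
  calc (∫ y in S, D y) + ∫ y in Tst, D y
      ≤ 10/α * M * δ ^ α + (2 * M * δ ^ α * Real.log (L / δ) + 4/(1-α) * M * δ ^ α) :=
        add_le_add hnear hfar
    _ ≤ (12/α + 4/(1-α) + 2) * M * δ ^ α * (Real.log (L / δ) + 1) := by
        set K := Real.log (L / δ) with hKdef
        have hcoef : (0:ℝ) ≤ 12/α + 4/(1-α) :=
          add_nonneg (div_nonneg (by norm_num) hα.le) (div_nonneg (by norm_num) hα'.le)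
        have e : (12/α + 4/(1-α) + 2) * M * δ ^ α * (K + 1)
            - (10/α * M * δ ^ α + (2 * M * δ ^ α * K + 4/(1-α) * M * δ ^ α))
            = (12/α + 4/(1-α)) * ((M * δ ^ α) * K) + (2/α) * (M * δ ^ α) + 2 * (M * δ ^ α) := by
          field_simp
          ring
        have t1 : 0 ≤ (12/α + 4/(1-α)) * ((M * δ ^ α) * K) :=
          mul_nonneg hcoef (mul_nonneg hP hlog)
        have t2 : 0 ≤ (2/α) * (M * δ ^ α) := mul_nonneg (div_nonneg (by norm_num) hα.le) hP
        linarith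

theorem T_log_holder (α : ℝ) (hα : 0 < α) (hα1 : α < 1) :
    ∃ C > 0, ∀ (a b : ℝ), a < b → ∀ (f : ℝ → ℝ) (M : ℝ), 0 ≤ M →
      (∀ x ∈ Icc a b, ∀ y ∈ Icc a b, |f x - f y| ≤ M * |x - y| ^ α) →
      ((∀ x₁ ∈ Icc a b, ∀ x₂ ∈ Icc a b, x₁ ≠ x₂ →
          |Thilb a b f x₂ - Thilb a b f x₁|
            ≤ C * M * |x₂ - x₁| ^ α * (Real.log ((b - a) / |x₂ - x₁|) + 1)) ∧
        (∀ α₀, 0 < α₀ → α₀ < α → ∃ C', ∀ x₁ ∈ Icc a b, ∀ x₂ ∈ Icc a b,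
          |Thilb a b f x₂ - Thilb a b f x₁| ≤ C' * |x₂ - x₁| ^ α₀)) := by
  have hα' : 0 < 1 - α := by linarith
  have hCpos : (0:ℝ) < 12/α + 4/(1-α) + 2 := by positivity
  refine ⟨12/α + 4/(1-α) + 2, hCpos, ?_⟩
  intro a b hab f M hM hf
  have hL : 0 < b - a := by linarith
  constructor
  · intro x₁ hx₁ x₂ hx₂ hne
    exact core hα hα1 hab hM hf hx₁ hx₂ hne
  · intro α₀ hα₀ hαα
    set β := α - α₀ with hβdef
    have hβ : 0 < β := by simp only [hβdef]; linarith
    set C := 12/α + 4/(1-α) + 2 with hCdef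
    refine ⟨C * M * (b-a) ^ β * (1/β + 1), ?_⟩
    intro x₁ hx₁ x₂ hx₂
    by_cases hne : x₁ = x₂
    · subst hne
      simp [sub_self, Real.zero_rpow hα₀.ne']
    · have hcore := core hα hα1 hab hM hf hx₁ hx₂ hne
      set δ := |x₂ - x₁| with hδdef
      have hδ : 0 < δ := abs_pos.mpr (sub_ne_zero.mpr (Ne.symm hne))
      have hδL : δ ≤ b - a := by
        rw [hδdef, abs_le]
        obtain ⟨ha1, hb1⟩ := hx₁; obtain ⟨ha2, hb2⟩ := hx₂
        constructor <;> linarith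
      have hquot : 0 < (b-a)/δ := div_pos hL hδ
      have hlogle : Real.log ((b-a)/δ) ≤ ((b-a)/δ) ^ β / β := by
        have h1 : β * Real.log ((b-a)/δ) = Real.log (((b-a)/δ) ^ β) :=
          (Real.log_rpow hquot β).symm
        have h2 : Real.log (((b-a)/δ) ^ β) ≤ ((b-a)/δ) ^ β - 1 :=
          Real.log_le_sub_one_of_pos (Real.rpow_pos_of_pos hquot β)
        rw [le_div_iff₀ hβ]
        calc Real.log ((b-a)/δ) * β = Real.log (((b-a)/δ) ^ β) := by rw [← h1]; ring
          _ ≤ ((b-a)/δ) ^ β - 1 := h2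
          _ ≤ ((b-a)/δ) ^ β := by linarith
      have hkey : δ ^ α * (Real.log ((b-a)/δ) + 1) ≤ (b-a) ^ β * (1/β + 1) * δ ^ α₀ := by
        have e1 : δ ^ α * ((b-a)/δ) ^ β = (b-a) ^ β * δ ^ α₀ := by
          have n1 : δ ^ α ≠ 0 := (Real.rpow_pos_of_pos hδ α).ne'
          have n2 : δ ^ α₀ ≠ 0 := (Real.rpow_pos_of_pos hδ α₀).ne'
          rw [Real.div_rpow hL.le hδ.le, show α₀ = α - β from by rw [hβdef]; ring,
            Real.rpow_sub hδ]
          field_simp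
          congr 1
          rw [hβdef]; ring
        have e2 : δ ^ α ≤ (b-a) ^ β * δ ^ α₀ := by
          have : δ ^ α = δ ^ β * δ ^ α₀ := by
            rw [← Real.rpow_add hδ]
            congr 1
            simp only [hβdef]; ring
          rw [this]
          have hb1 : δ ^ β ≤ (b-a) ^ β := Real.rpow_le_rpow hδ.le hδL hβ.le
          exact mul_le_mul_of_nonneg_right hb1 (Real.rpow_nonneg hδ.le _)
        calc δ ^ α * (Real.log ((b-a)/δ) + 1)
            ≤ δ ^ α * (((b-a)/δ) ^ β / β + 1) := by
              gcongr
          _ = (δ ^ α * ((b-a)/δ) ^ β) * (1/β) + δ ^ α := by ring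
          _ ≤ (b-a) ^ β * δ ^ α₀ * (1/β) + (b-a) ^ β * δ ^ α₀ := by
              rw [e1]
              gcongr
          _ = (b-a) ^ β * (1/β + 1) * δ ^ α₀ := by ring
      calc |Thilb a b f x₂ - Thilb a b f x₁|
          ≤ C * M * δ ^ α * (Real.log ((b-a)/δ) + 1) := hcore
        _ = (C * M) * (δ ^ α * (Real.log ((b-a)/δ) + 1)) := by ring
        _ ≤ (C * M) * ((b-a) ^ β * (1/β + 1) * δ ^ α₀) :=
            mul_le_mul_of_nonneg_left hkey (mul_nonneg hCpos.le hM)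
        _ = C * M * (b-a) ^ β * (1/β + 1) * δ ^ α₀ := by ring
end

section
/- If f ∈ C^{k,α}([a,b]) with 0 < α < 1, then for all x₁, x₂ ∈ [a,b] with x₁ ≠ x₂, |T_k f(x₂) - T_k f(x₁)| ≤ C ‖f‖_{C^{k,α}} |x₂-x₁|^α (ln|(b-a)/(x₂-x₁)| + 1), where C depends only on k and α. -/
open Set intervalIntegral

/-- The `k`-th Taylor polynomial of `f` centered at `x` (derivatives within `s`), at `y`. -/
noncomputable def taylorPolyWithin (f : ℝ → ℝ) (s : Set ℝ) (k : ℕ) (x y : ℝ) : ℝ :=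
  ∑ i ∈ Finset.range (k + 1), iteratedDerivWithin i f s x * (y - x) ^ i / (i.factorial : ℝ)

/-- The operator `T_k f(x) = k! ∫_a^b (f(y) - P_k(x,y))/(y-x)^{k+1} dy`. -/
noncomputable def Tk (a b : ℝ) (k : ℕ) (f : ℝ → ℝ) (x : ℝ) : ℝ :=
  (k.factorial : ℝ) *
    ∫ y in a..b, (f y - taylorPolyWithin f (Icc a b) k x y) / (y - x) ^ (k + 1)

open MeasureTheory

lemma taylorPolyWithin_self (f : ℝ → ℝ) (s : Set ℝ) (m : ℕ) (x : ℝ) :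
    taylorPolyWithin f s m x x = f x := by
  unfold taylorPolyWithin
  rw [Finset.sum_eq_single 0]
  · simp [iteratedDerivWithin_zero]
  · intro i _ hi
    simp [zero_pow hi]
  · simp

lemma iter_iter {a b : ℝ} (hab : a < b) (f : ℝ → ℝ) (i j : ℕ) {x : ℝ} (hx : x ∈ Icc a b) :
    iteratedDerivWithin j (iteratedDerivWithin i f (Icc a b)) (Icc a b) x
      = iteratedDerivWithin (i + j) f (Icc a b) x := by
  have hs : UniqueDiffOn ℝ (Icc a b) := uniqueDiffOn_Icc hab
  induction i generalizing f x with
  | zero => simp [iteratedDerivWithin_zero]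
  | succ i IH =>
    have h1 : Set.EqOn (iteratedDerivWithin (i+1) f (Icc a b))
        (iteratedDerivWithin i (derivWithin f (Icc a b)) (Icc a b)) (Icc a b) := by
      intro y hy
      exact congrFun iteratedDerivWithin_succ' y
    calc iteratedDerivWithin j (iteratedDerivWithin (i+1) f (Icc a b)) (Icc a b) x
        = iteratedDerivWithin j (iteratedDerivWithin i (derivWithin f (Icc a b)) (Icc a b)) (Icc a b) x :=
          iteratedDerivWithin_congr h1 hx
      _ = iteratedDerivWithin (i + j) (derivWithin f (Icc a b)) (Icc a b) x := IH _ hx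
      _ = iteratedDerivWithin (i + 1 + j) f (Icc a b) x := by
          rw [show i + 1 + j = (i + j) + 1 by ring, iteratedDerivWithin_succ']
lemma continuous_taylorPoly (f : ℝ → ℝ) (s : Set ℝ) (m : ℕ) (x : ℝ) :
    Continuous (fun z => taylorPolyWithin f s m x z) := by
  unfold taylorPolyWithin
  exact continuous_finset_sum _ (fun i _ => by fun_prop)

lemma hasDerivAt_taylorPoly {a b : ℝ} (hab : a < b) (f : ℝ → ℝ) (m : ℕ) {x : ℝ}
    (hx : x ∈ Icc a b) (y : ℝ) :
    HasDerivAt (fun z => taylorPolyWithin f (Icc a b) (m+1) x z)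
      (taylorPolyWithin (derivWithin f (Icc a b)) (Icc a b) m x y) y := by
  have hs : UniqueDiffOn ℝ (Icc a b) := uniqueDiffOn_Icc hab
  set c : ℕ → ℝ := fun i => iteratedDerivWithin i f (Icc a b) x with hc
  have hterm : ∀ i : ℕ, HasDerivAt (fun z => c i * (z - x) ^ i / (i.factorial : ℝ))
      (c i * ((i:ℝ) * (y - x) ^ (i-1)) / (i.factorial : ℝ)) y := by
    intro i
    have h1 : HasDerivAt (fun z : ℝ => (z - x) ^ i) ((i:ℝ) * (y - x) ^ (i-1)) y := by
      have := (hasDerivAt_pow i (y - x)).comp y ((hasDerivAt_id y).sub_const x)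
      simpa [Function.comp_def] using this
    exact (h1.const_mul (c i)).div_const _
  have hsum : HasDerivAt (fun z => taylorPolyWithin f (Icc a b) (m+1) x z)
      (∑ i ∈ Finset.range (m+2), c i * ((i:ℝ) * (y - x) ^ (i-1)) / (i.factorial : ℝ)) y := by
    have := HasDerivAt.fun_sum (fun i (_ : i ∈ Finset.range (m+2)) => hterm i)
    simpa [taylorPolyWithin] using this
  convert hsum using 1
  unfold taylorPolyWithin
  rw [Finset.sum_range_succ' (fun i => c i * ((i:ℝ) * (y - x) ^ (i-1)) / (i.factorial : ℝ)) (m+1)]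
  simp only [Nat.cast_zero, zero_mul, mul_zero, Nat.factorial_zero, Nat.cast_one, div_one, add_zero]
  apply Finset.sum_congr rfl
  intro j hj
  have hcv : iteratedDerivWithin j (derivWithin f (Icc a b)) (Icc a b) x = c (j+1) :=
    (congrFun iteratedDerivWithin_succ' x).symm
  rw [hcv]
  have : ((j+1).factorial : ℝ) = (j+1) * (j.factorial : ℝ) := by
    rw [Nat.factorial_succ]; push_cast; ring
  rw [this]
  have hjfact : (j.factorial : ℝ) ≠ 0 := Nat.cast_ne_zero.2 j.factorial_ne_zero
  simp only [Nat.add_sub_cancel]; field_simp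
  push_cast; ring
lemma remainder_bound {α M a b : ℝ} (hα : 0 < α) (hM : 0 ≤ M) (hab : a < b) :
    ∀ (m : ℕ) (u : ℝ → ℝ), ContDiffOn ℝ m u (Icc a b) →
    (∀ x ∈ Icc a b, ∀ y ∈ Icc a b,
      |iteratedDerivWithin m u (Icc a b) x - iteratedDerivWithin m u (Icc a b) y|
        ≤ M * |x - y| ^ α) →
    ∀ x ∈ Icc a b, ∀ y ∈ Icc a b,
      |u y - taylorPolyWithin u (Icc a b) m x y|
        ≤ M * |y - x| ^ ((m:ℝ) + α) / (m.factorial : ℝ) := by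
  have hs : UniqueDiffOn ℝ (Icc a b) := uniqueDiffOn_Icc hab
  intro m
  induction m with
  | zero =>
    intro u _ hH x hx y hy
    have h0 : taylorPolyWithin u (Icc a b) 0 x y = u x := by
      unfold taylorPolyWithin; simp [iteratedDerivWithin_zero]
    rw [h0]
    have := hH y hy x hx
    simp only [iteratedDerivWithin_zero] at this
    simpa [abs_sub_comm] using this
  | succ m IH =>
    intro u hu hH x hx y hy
    set v := derivWithin u (Icc a b) with hv_def
    have hv : ContDiffOn ℝ m v (Icc a b) := hu.derivWithin hs (by norm_cast)
    have hHv : ∀ x ∈ Icc a b, ∀ y ∈ Icc a b,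
        |iteratedDerivWithin m v (Icc a b) x - iteratedDerivWithin m v (Icc a b) y|
          ≤ M * |x - y| ^ α := by
      intro p hp q hq
      rw [iteratedDerivWithin_succ'] at hH
      exact hH p hp q hq
    have IHv := IH v hv hHv x hx
    set w : ℝ → ℝ := fun z => u z - taylorPolyWithin u (Icc a b) (m+1) x z with hw_def
    set w' : ℝ → ℝ := fun t => v t - taylorPolyWithin v (Icc a b) m x t with hw'_def
    have hderiv : ∀ t ∈ Icc a b, HasDerivWithinAt w (w' t) (Icc a b) t := by
      intro t ht
      have h1 : HasDerivWithinAt u (v t) (Icc a b) t :=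
        (hu.differentiableOn (by norm_cast) t ht).hasDerivWithinAt
      exact h1.sub (hasDerivAt_taylorPoly hab u m hx t).hasDerivWithinAt
    have hcont' : ContinuousOn w' (Icc a b) :=
      (hv.continuousOn).sub (continuous_taylorPoly v (Icc a b) m x).continuousOn
    have hcontw : ContinuousOn w (Icc a b) :=
      (hu.continuousOn).sub (continuous_taylorPoly u (Icc a b) (m+1) x).continuousOn
    have hbound : ∀ t ∈ Icc a b, |w' t| ≤ M * |t - x| ^ ((m:ℝ) + α) / (m.factorial : ℝ) :=
      fun t ht => IHv t ht
    set r : ℝ := (m:ℝ) + α with hr_def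
    have hr0 : 0 < r + 1 := by positivity
    have hrm : ((m:ℝ) + 1) ≤ r + 1 := by simp only [hr_def]; linarith
    have hwx : w x = 0 := by simp [hw_def, taylorPolyWithin_self]
    have hfact : ((m+1).factorial : ℝ) = ((m:ℝ)+1) * (m.factorial : ℝ) := by
      rw [Nat.factorial_succ]; push_cast; ring
    have key : ∀ z ∈ Icc a b, ∀ z' ∈ Icc a b, z ≤ z' →
        ∫ t in z..z', w' t = w z' - w z := by
      intro z hz z' hz' hzz
      apply integral_eq_sub_of_hasDeriv_right_of_le hzz
        (hcontw.mono (Icc_subset_Icc hz.1 hz'.2))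
      · intro t ht
        have ht' : t ∈ Icc a b := ⟨le_of_lt (lt_of_le_of_lt hz.1 ht.1),
          le_of_lt (lt_of_lt_of_le ht.2 hz'.2)⟩
        have hnb : Icc a b ∈ nhds t := Icc_mem_nhds (lt_of_le_of_lt hz.1 ht.1)
          (lt_of_lt_of_le ht.2 hz'.2)
        exact (((hderiv t ht').hasDerivAt hnb)).hasDerivWithinAt
      · exact (hcont'.mono (Icc_subset_Icc hz.1 hz'.2)).intervalIntegrable_of_Icc hzz
    rcases le_total x y with hxy | hyx
    · have hkey := key x hx y hy hxy
      have h1 : |w y| ≤ ∫ t in x..y, |w' t| := by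
        have hwy : w y = ∫ t in x..y, w' t := by rw [hkey, hwx, sub_zero]
        rw [hwy]
        simpa using intervalIntegral.norm_integral_le_integral_norm (μ := volume)
          (f := w') (a := x) (b := y) hxy
      have h2 : ∫ t in x..y, |w' t| ≤ ∫ t in x..y, M * (t - x) ^ r / (m.factorial : ℝ) := by
        apply intervalIntegral.integral_mono_on hxy
        · exact ((hcont'.mono (Icc_subset_Icc hx.1 hy.2)).abs).intervalIntegrable_of_Icc hxy
        · apply ContinuousOn.intervalIntegrable_of_Icc hxy
          apply ContinuousOn.div_const
          apply ContinuousOn.mul continuousOn_const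
          exact (continuousOn_id.sub continuousOn_const).rpow_const
            (fun t _ => Or.inr (by rw [hr_def]; positivity))
        · intro t ht
          have ht' : t ∈ Icc a b := ⟨le_trans hx.1 ht.1, le_trans ht.2 hy.2⟩
          have := hbound t ht'
          rwa [abs_of_nonneg (by linarith [ht.1] : (0:ℝ) ≤ t - x)] at this
      have h3 : ∫ t in x..y, M * (t - x) ^ r / (m.factorial : ℝ)
          = M / (m.factorial : ℝ) * ((y - x) ^ (r+1) / (r+1)) := by
        have : ∀ t, M * (t - x) ^ r / (m.factorial : ℝ)
            = M / (m.factorial : ℝ) * ((fun u : ℝ => u ^ r) (t - x)) := by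
          intro t; ring
        simp_rw [this]
        rw [intervalIntegral.integral_const_mul,
          intervalIntegral.integral_comp_sub_right (fun u : ℝ => u ^ r) x, sub_self,
          integral_rpow (Or.inl (by rw [hr_def]; have := (Nat.cast_nonneg m : (0:ℝ) ≤ m); linarith))]
        rw [Real.zero_rpow (ne_of_gt hr0)]
        ring
      have h4 : (y - x) ^ (r+1) = |y - x| ^ (((m+1:ℕ):ℝ) + α) := by
        rw [abs_of_nonneg (by linarith : (0:ℝ) ≤ y - x)]
        congr 1
        push_cast; ring
      calc |u y - taylorPolyWithin u (Icc a b) (m+1) x y| = |w y| := rfl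
        _ ≤ M / (m.factorial : ℝ) * ((y - x) ^ (r+1) / (r+1)) := by
            rw [← h3]; exact le_trans h1 h2
        _ ≤ M * |y - x| ^ (((m+1:ℕ):ℝ) + α) / ((m+1).factorial : ℝ) := by
            rw [h4, hfact]
            have hA : (0:ℝ) ≤ M * |y - x| ^ (((m+1:ℕ):ℝ) + α) :=
              mul_nonneg hM (Real.rpow_nonneg (abs_nonneg _) _)
            rw [div_mul_div_comm, mul_comm (m.factorial : ℝ) (r+1)]
            exact div_le_div_of_nonneg_left hA (by positivity)
              (mul_le_mul_of_nonneg_right hrm (by positivity))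
    · -- y ≤ x
      have hkey := key y hy x hx hyx
      have h1 : |w y| ≤ ∫ t in y..x, |w' t| := by
        have : w y = -(∫ t in y..x, w' t) := by rw [hkey, hwx]; ring
        rw [this, abs_neg]
        simpa using intervalIntegral.norm_integral_le_integral_norm (μ := volume)
          (f := w') (a := y) (b := x) hyx
      have h2 : ∫ t in y..x, |w' t| ≤ ∫ t in y..x, M * (x - t) ^ r / (m.factorial : ℝ) := by
        apply intervalIntegral.integral_mono_on hyx
        · exact ((hcont'.mono (Icc_subset_Icc hy.1 hx.2)).abs).intervalIntegrable_of_Icc hyx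
        · apply ContinuousOn.intervalIntegrable_of_Icc hyx
          apply ContinuousOn.div_const
          apply ContinuousOn.mul continuousOn_const
          exact (continuousOn_const.sub continuousOn_id).rpow_const
            (fun t _ => Or.inr (by rw [hr_def]; positivity))
        · intro t ht
          have ht' : t ∈ Icc a b := ⟨le_trans hy.1 ht.1, le_trans ht.2 hx.2⟩
          have h5 : |t - x| = x - t := by
            rw [abs_sub_comm]; exact abs_of_nonneg (by linarith [ht.2])
          have := hbound t ht'
          rwa [h5] at this
      have h3 : ∫ t in y..x, M * (x - t) ^ r / (m.factorial : ℝ)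
          = M / (m.factorial : ℝ) * ((x - y) ^ (r+1) / (r+1)) := by
        have : ∀ t, M * (x - t) ^ r / (m.factorial : ℝ)
            = M / (m.factorial : ℝ) * ((fun u : ℝ => u ^ r) (x - t)) := by
          intro t; ring
        simp_rw [this]
        rw [intervalIntegral.integral_const_mul,
          intervalIntegral.integral_comp_sub_left (fun u : ℝ => u ^ r) x, sub_self,
          integral_rpow (Or.inl (by rw [hr_def]; have := (Nat.cast_nonneg m : (0:ℝ) ≤ m); linarith))]
        rw [Real.zero_rpow (ne_of_gt hr0)]
        ring
      have h4 : (x - y) ^ (r+1) = |y - x| ^ (((m+1:ℕ):ℝ) + α) := by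
        rw [abs_sub_comm, abs_of_nonneg (by linarith : (0:ℝ) ≤ x - y)]
        congr 1
        push_cast; ring
      calc |u y - taylorPolyWithin u (Icc a b) (m+1) x y| = |w y| := rfl
        _ ≤ M / (m.factorial : ℝ) * ((x - y) ^ (r+1) / (r+1)) := by
            rw [← h3]; exact le_trans h1 h2
        _ ≤ M * |y - x| ^ (((m+1:ℕ):ℝ) + α) / ((m+1).factorial : ℝ) := by
            rw [h4, hfact]
            have hA : (0:ℝ) ≤ M * |y - x| ^ (((m+1:ℕ):ℝ) + α) :=
              mul_nonneg hM (Real.rpow_nonneg (abs_nonneg _) _)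
            rw [div_mul_div_comm, mul_comm (m.factorial : ℝ) (r+1)]
            exact div_le_div_of_nonneg_left hA (by positivity)
              (mul_le_mul_of_nonneg_right hrm (by positivity))

lemma taylor_shift {a b : ℝ} (hab : a < b) (f : ℝ → ℝ) (k : ℕ) {x₁ : ℝ}
    (hx₁ : x₁ ∈ Icc a b) (x₂ y : ℝ) :
    taylorPolyWithin f (Icc a b) k x₁ y
      = ∑ i ∈ Finset.range (k+1),
          taylorPolyWithin (iteratedDerivWithin i f (Icc a b)) (Icc a b) (k-i) x₁ x₂
            * (y - x₂) ^ i / (i.factorial : ℝ) := by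
  set D : ℕ → ℝ := fun n => iteratedDerivWithin n f (Icc a b) x₁ with hD
  have hRHS : ∀ i, taylorPolyWithin (iteratedDerivWithin i f (Icc a b)) (Icc a b) (k-i) x₁ x₂
      = ∑ j ∈ Finset.range (k-i+1), D (i+j) * (x₂ - x₁) ^ j / (j.factorial : ℝ) := by
    intro i
    unfold taylorPolyWithin
    exact Finset.sum_congr rfl fun j _ => by rw [iter_iter hab f i j hx₁]
  simp_rw [hRHS]
  unfold taylorPolyWithin
  have hLHS : ∀ n ∈ Finset.range (k+1), D n * (y - x₁) ^ n / (n.factorial : ℝ)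
      = ∑ i ∈ Finset.range (n+1),
          D n * (y - x₂) ^ i * (x₂ - x₁) ^ (n-i) * (n.choose i : ℝ) / (n.factorial : ℝ) := by
    intro n _
    have : (y - x₁) ^ n = ∑ i ∈ Finset.range (n+1),
        (y - x₂) ^ i * (x₂ - x₁) ^ (n-i) * (n.choose i : ℝ) := by
      rw [show y - x₁ = (y - x₂) + (x₂ - x₁) by ring, add_pow]
    rw [this, Finset.mul_sum, Finset.sum_div]
    exact Finset.sum_congr rfl fun i _ => by ring
  rw [Finset.sum_congr rfl hLHS]
  have hsum : ∀ i ∈ Finset.range (k+1),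
      (∑ j ∈ Finset.range (k-i+1), D (i+j) * (x₂ - x₁) ^ j / (j.factorial : ℝ)) * (y - x₂) ^ i
        / (i.factorial : ℝ)
      = ∑ j ∈ Finset.range (k-i+1),
          D (i+j) * (x₂ - x₁) ^ j / (j.factorial : ℝ) * (y - x₂) ^ i / (i.factorial : ℝ) := by
    intro i _
    rw [Finset.sum_mul, Finset.sum_div]
  rw [Finset.sum_congr rfl hsum]
  rw [Finset.sum_sigma', Finset.sum_sigma']
  apply Finset.sum_nbij' (i := fun p => ⟨p.2, p.1 - p.2⟩) (j := fun q => ⟨q.1 + q.2, q.1⟩)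
  · intro p hp
    simp only [Finset.mem_sigma, Finset.mem_range] at hp ⊢
    omega
  · intro q hq
    simp only [Finset.mem_sigma, Finset.mem_range] at hq ⊢
    omega
  · rintro ⟨n, i⟩ hp
    simp only [Finset.mem_sigma, Finset.mem_range] at hp
    have h1 : i + (n - i) = n := by omega
    simp only [h1]
  · rintro ⟨i, j⟩ hq
    simp only [Finset.mem_sigma, Finset.mem_range] at hq
    have h1 : i + j - i = j := by omega
    simp only [h1]
  · intro p hp
    simp only [Finset.mem_sigma, Finset.mem_range] at hp
    have hip : p.2 ≤ p.1 := by omega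
    have h1 : p.2 + (p.1 - p.2) = p.1 := by omega
    simp only [h1]
    have hch : (p.1.choose p.2 : ℝ) = (p.1.factorial : ℝ)
        / ((p.2.factorial : ℝ) * ((p.1 - p.2).factorial : ℝ)) := Nat.cast_choose ℝ hip
    rw [hch]
    have n1 : (p.1.factorial : ℝ) ≠ 0 := by positivity
    have n2 : (p.2.factorial : ℝ) ≠ 0 := by positivity
    have n3 : ((p.1 - p.2).factorial : ℝ) ≠ 0 := by positivity
    field_simp
lemma contDiffOn_iter {a b : ℝ} (hab : a < b) :
    ∀ (i : ℕ) (m : ℕ) (f : ℝ → ℝ), ContDiffOn ℝ (i + m : ℕ) f (Icc a b) →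
      ContDiffOn ℝ m (iteratedDerivWithin i f (Icc a b)) (Icc a b) := by
  have hs : UniqueDiffOn ℝ (Icc a b) := uniqueDiffOn_Icc hab
  intro i
  induction i with
  | zero =>
    intro m f hf
    have : iteratedDerivWithin 0 f (Icc a b) = f := iteratedDerivWithin_zero
    rw [this]
    simpa using hf
  | succ i IH =>
    intro m f hf
    have hdf : ContDiffOn ℝ (i + m : ℕ) (derivWithin f (Icc a b)) (Icc a b) := by
      apply hf.derivWithin hs
      norm_cast
      omega
    have h2 := IH m (derivWithin f (Icc a b)) hdf
    apply h2.congr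
    intro y hy
    exact congrFun iteratedDerivWithin_succ' y

-- arithmetic helpers
lemma key_ht {α h t : ℝ} (hα : 0 < α) (hα1 : α ≤ 1) (hh : 0 < h) (hht : h ≤ t) :
    h * t ^ α ≤ h ^ α * t := by
  have ht : 0 < t := lt_of_lt_of_le hh hht
  have h1 : h ^ (1-α) ≤ t ^ (1-α) := Real.rpow_le_rpow hh.le hht (by linarith)
  calc h * t ^ α = h ^ α * h ^ (1-α) * t ^ α := by
        rw [← Real.rpow_add hh]; norm_num
    _ ≤ h ^ α * t ^ (1-α) * t ^ α := by gcongr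
    _ = h ^ α * t := by
        rw [mul_assoc, ← Real.rpow_add ht]; norm_num

lemma term_bound {α h t M : ℝ} (hα : 0 < α) (hα1 : α ≤ 1) (hh : 0 < h) (hM : 0 ≤ M)
    (hht : 2 * h ≤ t) (i j : ℕ) :
    M * h ^ ((j:ℝ) + α) * (2*t) ^ i ≤ 2 ^ (i+j) * M * h ^ α * t ^ (i+j) := by
  have ht : 0 < t := by linarith
  have hsplit : h ^ ((j:ℝ) + α) = h ^ (j:ℕ) * h ^ α := by
    rw [Real.rpow_add hh, Real.rpow_natCast]
  rw [hsplit]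
  have h2 : h ^ (j:ℕ) ≤ (t/2) ^ j := by
    apply pow_le_pow_left₀ hh.le; linarith
  have hha : 0 ≤ h ^ α := Real.rpow_nonneg hh.le _
  calc M * (h ^ (j:ℕ) * h ^ α) * (2*t) ^ i
      ≤ M * ((t/2) ^ j * h ^ α) * (2*t) ^ i := by gcongr
    _ ≤ M * (t ^ j * h ^ α) * (2*t) ^ i := by
        gcongr
        linarith
    _ = 2 ^ i * M * h ^ α * (t ^ (i+j)) := by ring
    _ ≤ 2 ^ (i+j) * M * h ^ α * t ^ (i+j) := by
        have h3 : (2:ℝ) ^ i ≤ 2 ^ (i+j) := by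
          apply pow_le_pow_right₀ (by norm_num) (by omega)
        have h4 : (0:ℝ) ≤ M * h ^ α * t ^ (i+j) := by positivity
        calc 2 ^ i * M * h ^ α * t ^ (i+j) = (M * h ^ α * t ^ (i+j)) * 2 ^ i := by ring
          _ ≤ (M * h ^ α * t ^ (i+j)) * 2 ^ (i+j) := mul_le_mul_of_nonneg_left h3 h4
          _ = 2 ^ (i+j) * M * h ^ α * t ^ (i+j) := by ring

set_option maxHeartbeats 2000000 in
lemma far_bound {α M a b : ℝ} (hα : 0 < α) (hα1 : α ≤ 1) (hM : 0 ≤ M) (hab : a < b) (k : ℕ)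
    (f : ℝ → ℝ) (hf : ContDiffOn ℝ k f (Icc a b))
    (hH : ∀ x ∈ Icc a b, ∀ y ∈ Icc a b,
      |iteratedDerivWithin k f (Icc a b) x - iteratedDerivWithin k f (Icc a b) y|
        ≤ M * |x - y| ^ α)
    {x₁ x₂ : ℝ} (hx₁ : x₁ ∈ Icc a b) (hx₂ : x₂ ∈ Icc a b) (hne : x₁ ≠ x₂)
    {y : ℝ} (hy : y ∈ Icc a b) (hfar : 2 * |x₂ - x₁| ≤ |y - x₁|) :
    |(f y - taylorPolyWithin f (Icc a b) k x₂ y) / (y - x₂) ^ (k+1)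
      - (f y - taylorPolyWithin f (Icc a b) k x₁ y) / (y - x₁) ^ (k+1)|
      ≤ ((k:ℝ)+1) * 2 ^ (k+3) * M * |x₂ - x₁| ^ α / |y - x₁| := by
  set h := |x₂ - x₁| with hh_def
  set t := |y - x₁| with ht_def
  have hh : 0 < h := abs_pos.2 (sub_ne_zero.2 (Ne.symm hne))
  have ht : 0 < t := by linarith
  have hht : h ≤ t/2 := by linarith
  have hyx₁ : y - x₁ ≠ 0 := abs_pos.1 ht
  set p := y - x₂ with hp_def
  set q := y - x₁ with hq_def
  have hqp : q - p = x₂ - x₁ := by rw [hp_def, hq_def]; ring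
  have hpl : t/2 ≤ |p| := by
    have h1 : |q| - |q - p| ≤ |p| := by
      have := abs_sub_abs_le_abs_sub q p
      linarith [this]
    rw [hqp] at h1
    have : |q| = t := rfl
    linarith [h1]
  have hpu : |p| ≤ 2*t := by
    have h1 : |p| ≤ |q| + |q - p| := by
      have := abs_sub q p
      calc |p| = |q - (q - p)| := by ring_nf
        _ ≤ |q| + |q - p| := abs_sub _ _
    rw [hqp] at h1
    have : |q| = t := rfl
    linarith [h1]
  have hp0 : (0:ℝ) < |p| := lt_of_lt_of_le (by positivity) hpl
  have hpne : p ≠ 0 := abs_pos.1 hp0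
  have hpK : p ^ (k+1) ≠ 0 := pow_ne_zero _ hpne
  have hqK : q ^ (k+1) ≠ 0 := pow_ne_zero _ hyx₁
  set P₁ := taylorPolyWithin f (Icc a b) k x₁ y with hP₁
  set P₂ := taylorPolyWithin f (Icc a b) k x₂ y with hP₂
  have decomp : (f y - P₂) / p ^ (k+1) - (f y - P₁) / q ^ (k+1)
      = (f y - P₂) * (1 / p ^ (k+1) - 1 / q ^ (k+1)) + (P₁ - P₂) / q ^ (k+1) := by
    field_simp
    ring
  rw [decomp]
  have habs : |(f y - P₂) * (1 / p ^ (k+1) - 1 / q ^ (k+1)) + (P₁ - P₂) / q ^ (k+1)|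
      ≤ |f y - P₂| * |1 / p ^ (k+1) - 1 / q ^ (k+1)| + |P₁ - P₂| / t ^ (k+1) := by
    calc |(f y - P₂) * (1 / p ^ (k+1) - 1 / q ^ (k+1)) + (P₁ - P₂) / q ^ (k+1)|
        ≤ |(f y - P₂) * (1 / p ^ (k+1) - 1 / q ^ (k+1))| + |(P₁ - P₂) / q ^ (k+1)| := abs_add_le _ _
      _ = |f y - P₂| * |1 / p ^ (k+1) - 1 / q ^ (k+1)| + |P₁ - P₂| / t ^ (k+1) := by
          rw [abs_mul, abs_div, abs_pow]
  apply le_trans habs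
  -- Bound the X-part
  have hX : |f y - P₂| ≤ M * (|p| ^ k * |p| ^ α) := by
    have h1 := remainder_bound hα hM hab k f hf hH x₂ hx₂ y hy
    have h2 : |y - x₂| ^ ((k:ℝ) + α) = |p| ^ k * |p| ^ α := by
      rw [Real.rpow_add hp0, Real.rpow_natCast]
    rw [h2] at h1
    calc |f y - P₂| ≤ M * (|p| ^ k * |p| ^ α) / (k.factorial : ℝ) := h1
      _ ≤ M * (|p| ^ k * |p| ^ α) := by
          apply div_le_self (by positivity)
          exact_mod_cast Nat.one_le_iff_ne_zero.2 k.factorial_ne_zero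
  have hY : |1 / p ^ (k+1) - 1 / q ^ (k+1)|
      ≤ h * ((k:ℝ)+1) * (2*t) ^ k / (|p| ^ (k+1) * t ^ (k+1)) := by
    have heq : 1 / p ^ (k+1) - 1 / q ^ (k+1) = (q ^ (k+1) - p ^ (k+1)) / (p ^ (k+1) * q ^ (k+1)) := by
      field_simp
    rw [heq, abs_div, abs_mul, abs_pow, abs_pow]
    have hnum : |q ^ (k+1) - p ^ (k+1)| ≤ h * ((k:ℝ)+1) * (2*t) ^ k := by
      have hgeom := geom_sum₂_mul q p (k+1)
      rw [← hgeom, abs_mul, hqp]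
      have hsum : |∑ i ∈ Finset.range (k+1), q ^ i * p ^ (k + 1 - 1 - i)| ≤ ((k:ℝ)+1) * (2*t) ^ k := by
        calc |∑ i ∈ Finset.range (k+1), q ^ i * p ^ (k + 1 - 1 - i)|
            ≤ ∑ i ∈ Finset.range (k+1), |q ^ i * p ^ (k + 1 - 1 - i)| := Finset.abs_sum_le_sum_abs _ _
          _ ≤ ∑ _i ∈ Finset.range (k+1), (2*t) ^ k := by
              apply Finset.sum_le_sum
              intro i hi
              simp only [Finset.mem_range] at hi
              rw [abs_mul, abs_pow, abs_pow]
              have hqb : |q| ≤ 2*t := by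
                have h5 : |q| = t := rfl
                linarith
              calc |q| ^ i * |p| ^ (k + 1 - 1 - i) ≤ (2*t) ^ i * (2*t) ^ (k + 1 - 1 - i) := by
                    gcongr <;> first | exact hqb | exact hpu | positivity
                _ = (2*t) ^ k := by
                    rw [← pow_add]
                    congr 1
                    omega
          _ = ((k:ℝ)+1) * (2*t) ^ k := by
              rw [Finset.sum_const, Finset.card_range, nsmul_eq_mul]
              push_cast; ring
      calc |∑ i ∈ Finset.range (k+1), q ^ i * p ^ (k + 1 - 1 - i)| * |x₂ - x₁|
          ≤ (((k:ℝ)+1) * (2*t) ^ k) * h := by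
            apply mul_le_mul_of_nonneg_right hsum (abs_nonneg _)
        _ = h * ((k:ℝ)+1) * (2*t) ^ k := by ring
    gcongr
  -- combine A part
  have hA : |f y - P₂| * |1 / p ^ (k+1) - 1 / q ^ (k+1)|
      ≤ ((k:ℝ)+1) * 2 ^ (k+2) * M * h ^ α / t := by
    have hkey := key_ht hα hα1 hh (by linarith : h ≤ t)
    calc |f y - P₂| * |1 / p ^ (k+1) - 1 / q ^ (k+1)|
        ≤ (M * (|p| ^ k * |p| ^ α)) * (h * ((k:ℝ)+1) * (2*t) ^ k / (|p| ^ (k+1) * t ^ (k+1))) := by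
          apply mul_le_mul hX hY (abs_nonneg _) (by positivity)
      _ ≤ ((k:ℝ)+1) * 2 ^ (k+2) * M * h ^ α / t := by
          rw [show M * (|p| ^ k * |p| ^ α) * (h * ((k:ℝ)+1) * (2*t) ^ k / (|p| ^ (k+1) * t ^ (k+1)))
              = (M * (|p| ^ k * |p| ^ α) * (h * ((k:ℝ)+1) * (2*t) ^ k)) / (|p| ^ (k+1) * t ^ (k+1))
              from by ring]
          rw [div_le_div_iff₀ (by positivity) ht]
          have hPa : |p| ^ α ≤ 2 * t ^ α := by
            calc |p| ^ α ≤ (2*t) ^ α := Real.rpow_le_rpow (abs_nonneg _) hpu (by linarith)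
              _ = 2 ^ α * t ^ α := Real.mul_rpow (by norm_num) ht.le
              _ ≤ 2 * t ^ α := by
                  have h2a : (2:ℝ) ^ α ≤ 2 ^ (1:ℝ) :=
                    Real.rpow_le_rpow_of_exponent_le (by norm_num) hα1
                  rw [Real.rpow_one] at h2a
                  have := Real.rpow_nonneg ht.le α
                  nlinarith
          have hstep : h * |p| ^ α ≤ 4 * (h ^ α * |p|) := by
            calc h * |p| ^ α ≤ h * (2 * t ^ α) := by
                  apply mul_le_mul_of_nonneg_left hPa hh.le
              _ = 2 * (h * t ^ α) := by ring
              _ ≤ 2 * (h ^ α * t) := by linarith [hkey]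
              _ ≤ 2 * (h ^ α * (2 * |p|)) := by
                  have hha : 0 ≤ h ^ α := Real.rpow_nonneg hh.le _
                  have : t ≤ 2 * |p| := by linarith
                  nlinarith
              _ = 4 * (h ^ α * |p|) := by ring
          calc M * (|p| ^ k * |p| ^ α) * (h * ((k:ℝ)+1) * (2*t) ^ k) * t
              = (h * |p| ^ α) * (((k:ℝ)+1) * M * 2 ^ k * (|p| ^ k * (t ^ k * t))) := by ring
            _ ≤ (4 * (h ^ α * |p|)) * (((k:ℝ)+1) * M * 2 ^ k * (|p| ^ k * (t ^ k * t))) := by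
                apply mul_le_mul_of_nonneg_right hstep (by positivity)
            _ = ((k:ℝ)+1) * 2 ^ (k+2) * M * h ^ α * (|p| ^ (k+1) * t ^ (k+1)) := by ring
  have hB : |P₁ - P₂| / t ^ (k+1) ≤ ((k:ℝ)+1) * 2 ^ k * M * h ^ α / t := by
    have hshift := taylor_shift hab f k hx₁ x₂ y
    have hdiff : P₁ - P₂ = ∑ i ∈ Finset.range (k+1),
        (taylorPolyWithin (iteratedDerivWithin i f (Icc a b)) (Icc a b) (k-i) x₁ x₂
          - iteratedDerivWithin i f (Icc a b) x₂) * (y - x₂) ^ i / (i.factorial : ℝ) := by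
      rw [hP₁, hshift, hP₂]
      unfold taylorPolyWithin
      rw [← Finset.sum_sub_distrib]
      exact Finset.sum_congr rfl fun i _ => by ring
    have hQ : ∀ i ∈ Finset.range (k+1),
        |taylorPolyWithin (iteratedDerivWithin i f (Icc a b)) (Icc a b) (k-i) x₁ x₂
          - iteratedDerivWithin i f (Icc a b) x₂| ≤ M * h ^ (((k-i:ℕ):ℝ) + α) := by
      intro i hi
      simp only [Finset.mem_range] at hi
      have hik : i + (k - i) = k := by omega
      have hcd : ContDiffOn ℝ (k-i : ℕ) (iteratedDerivWithin i f (Icc a b)) (Icc a b) := by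
        apply contDiffOn_iter hab i (k-i) f
        rw [hik]; exact hf
      have hHi : ∀ x ∈ Icc a b, ∀ y ∈ Icc a b,
          |iteratedDerivWithin (k-i) (iteratedDerivWithin i f (Icc a b)) (Icc a b) x
            - iteratedDerivWithin (k-i) (iteratedDerivWithin i f (Icc a b)) (Icc a b) y|
            ≤ M * |x - y| ^ α := by
        intro x hx y' hy'
        rw [iter_iter hab f i (k-i) hx, iter_iter hab f i (k-i) hy', hik]
        exact hH x hx y' hy'
      have h1 := remainder_bound hα hM hab (k-i) (iteratedDerivWithin i f (Icc a b)) hcd hHi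
        x₁ hx₁ x₂ hx₂
      rw [abs_sub_comm]
      calc |iteratedDerivWithin i f (Icc a b) x₂
            - taylorPolyWithin (iteratedDerivWithin i f (Icc a b)) (Icc a b) (k-i) x₁ x₂|
          ≤ M * |x₂ - x₁| ^ (((k-i:ℕ):ℝ) + α) / ((k-i).factorial : ℝ) := h1
        _ ≤ M * h ^ (((k-i:ℕ):ℝ) + α) := by
            apply div_le_self (by positivity)
            exact_mod_cast Nat.one_le_iff_ne_zero.2 (k-i).factorial_ne_zero
    have hPP : |P₁ - P₂| ≤ ((k:ℝ)+1) * (2 ^ k * M * h ^ α * t ^ k) := by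
      rw [hdiff]
      calc |∑ i ∈ Finset.range (k+1),
          (taylorPolyWithin (iteratedDerivWithin i f (Icc a b)) (Icc a b) (k-i) x₁ x₂
            - iteratedDerivWithin i f (Icc a b) x₂) * (y - x₂) ^ i / (i.factorial : ℝ)|
          ≤ ∑ i ∈ Finset.range (k+1),
            |(taylorPolyWithin (iteratedDerivWithin i f (Icc a b)) (Icc a b) (k-i) x₁ x₂
              - iteratedDerivWithin i f (Icc a b) x₂) * (y - x₂) ^ i / (i.factorial : ℝ)| :=
            Finset.abs_sum_le_sum_abs _ _
        _ ≤ ∑ _i ∈ Finset.range (k+1), 2 ^ k * M * h ^ α * t ^ k := by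
            apply Finset.sum_le_sum
            intro i hi
            simp only [Finset.mem_range] at hi
            have hik : i + (k - i) = k := by omega
            rw [abs_div, abs_mul, abs_pow]
            have hfac : (1:ℝ) ≤ |(i.factorial : ℝ)| := by
              rw [abs_of_nonneg (by positivity)]
              exact_mod_cast Nat.one_le_iff_ne_zero.2 i.factorial_ne_zero
            have step1 : |taylorPolyWithin (iteratedDerivWithin i f (Icc a b)) (Icc a b) (k-i) x₁ x₂
                - iteratedDerivWithin i f (Icc a b) x₂| * |y - x₂| ^ i / |(i.factorial : ℝ)|
                ≤ (M * h ^ (((k-i:ℕ):ℝ) + α)) * (2*t) ^ i := by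
              calc |taylorPolyWithin (iteratedDerivWithin i f (Icc a b)) (Icc a b) (k-i) x₁ x₂
                  - iteratedDerivWithin i f (Icc a b) x₂| * |y - x₂| ^ i / |(i.factorial : ℝ)|
                  ≤ |taylorPolyWithin (iteratedDerivWithin i f (Icc a b)) (Icc a b) (k-i) x₁ x₂
                    - iteratedDerivWithin i f (Icc a b) x₂| * |y - x₂| ^ i := by
                    apply div_le_self (by positivity) hfac
                _ ≤ (M * h ^ (((k-i:ℕ):ℝ) + α)) * (2*t) ^ i := by
                    apply mul_le_mul (hQ i (by simp [Finset.mem_range]; omega)) ?_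
                      (by positivity) (by positivity)
                    exact pow_le_pow_left₀ (abs_nonneg _) hpu i
            have h7 := term_bound hα hα1 hh hM (by linarith : 2*h ≤ t) i (k-i)
            rw [hik] at h7
            exact le_trans step1 h7
        _ = ((k:ℝ)+1) * (2 ^ k * M * h ^ α * t ^ k) := by
            rw [Finset.sum_const, Finset.card_range, nsmul_eq_mul]
            push_cast; ring
    calc |P₁ - P₂| / t ^ (k+1) ≤ (((k:ℝ)+1) * (2 ^ k * M * h ^ α * t ^ k)) / t ^ (k+1) := by
          gcongr
      _ = ((k:ℝ)+1) * 2 ^ k * M * h ^ α / t := by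
          rw [pow_succ]
          field_simp
  calc |f y - P₂| * |1 / p ^ (k+1) - 1 / q ^ (k+1)| + |P₁ - P₂| / t ^ (k+1)
      ≤ ((k:ℝ)+1) * 2 ^ (k+2) * M * h ^ α / t + ((k:ℝ)+1) * 2 ^ k * M * h ^ α / t :=
        add_le_add hA hB
    _ ≤ ((k:ℝ)+1) * 2 ^ (k+3) * M * h ^ α / t := by
        rw [← add_div]
        have h9 : (0:ℝ) ≤ ((k:ℝ)+1) * M * h ^ α * 2 ^ k := by positivity
        have e1 : (2:ℝ) ^ (k+2) = 4 * 2 ^ k := by ring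
        have e2 : (2:ℝ) ^ (k+3) = 8 * 2 ^ k := by ring
        have hnum : ((k:ℝ)+1) * 2 ^ (k+2) * M * h ^ α + ((k:ℝ)+1) * 2 ^ k * M * h ^ α
            ≤ ((k:ℝ)+1) * 2 ^ (k+3) * M * h ^ α := by
          rw [e1, e2]
          nlinarith [h9]
        rw [div_le_div_iff₀ ht ht]
        exact mul_le_mul_of_nonneg_right hnum ht.le
lemma intervalIntegrable_abs_rpow {r : ℝ} (hr : -1 < r) (c A B : ℝ) :
    IntervalIntegrable (fun y => |y - c| ^ r) volume A B := by
  have hhalf : ∀ C : ℝ, IntervalIntegrable (fun u : ℝ => |u| ^ r) volume 0 C := by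
    have hpos : ∀ C : ℝ, 0 ≤ C → IntervalIntegrable (fun u : ℝ => |u| ^ r) volume 0 C := by
      intro C hC
      rw [intervalIntegrable_iff_integrableOn_Ioc_of_le hC]
      apply IntegrableOn.congr_fun
        ((intervalIntegrable_rpow' hr (a := 0) (b := C)).1)
        (fun u hu => by
          simp only [Set.mem_Ioc] at hu
          rw [abs_of_pos hu.1])
      exact measurableSet_Ioc
    intro C
    rcases le_total 0 C with hC | hC
    · exact hpos C hC
    · have h1 := hpos (-C) (by linarith)
      have h2 := (IntervalIntegrable.iff_comp_neg).mp h1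
      simp only [neg_zero, neg_neg, abs_neg] at h2
      exact h2.symm.symm
  have hAB : IntervalIntegrable (fun u : ℝ => |u| ^ r) volume (A - c) (B - c) :=
    ((hhalf (A - c)).symm).trans (hhalf (B - c))
  have := hAB.comp_sub_right c
  simpa using this

lemma integral_abs_rpow_Ioc {α : ℝ} (hα : 0 < α) (c R : ℝ) (hR : 0 ≤ R) :
    ∫ y in Ioc (c-R) (c+R), |y - c| ^ (α-1) = 2 * R ^ α / α := by
  have hint : ∀ A B : ℝ, IntervalIntegrable (fun y => |y - c| ^ (α-1)) volume A B :=
    intervalIntegrable_abs_rpow (by linarith) c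
  rw [← intervalIntegral.integral_of_le (by linarith : c - R ≤ c + R)]
  rw [← intervalIntegral.integral_add_adjacent_intervals (b := c) (hint _ _) (hint _ _)]
  have hleft : ∫ y in (c-R)..c, |y - c| ^ (α-1) = R ^ α / α := by
    have hcg : ∀ y ∈ uIcc (c-R) c, |y - c| ^ (α-1) = (fun u : ℝ => u ^ (α-1)) (c - y) := by
      intro y hy
      rw [uIcc_of_le (by linarith)] at hy
      simp only
      rw [abs_sub_comm, abs_of_nonneg (by linarith [hy.2] : (0:ℝ) ≤ c - y)]
    rw [intervalIntegral.integral_congr hcg,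
      intervalIntegral.integral_comp_sub_left (fun u : ℝ => u ^ (α-1)) c, sub_self,
      integral_rpow (Or.inl (by linarith))]
    rw [show c - (c - R) = R by ring, Real.zero_rpow (by linarith), sub_add_cancel]
    simp
  have hright : ∫ y in c..(c+R), |y - c| ^ (α-1) = R ^ α / α := by
    have hcg : ∀ y ∈ uIcc c (c+R), |y - c| ^ (α-1) = (fun u : ℝ => u ^ (α-1)) (y - c) := by
      intro y hy
      rw [uIcc_of_le (by linarith)] at hy
      simp only
      rw [abs_of_nonneg (by linarith [hy.1] : (0:ℝ) ≤ y - c)]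
    rw [intervalIntegral.integral_congr hcg,
      intervalIntegral.integral_comp_sub_right (fun u : ℝ => u ^ (α-1)) c, sub_self,
      integral_rpow (Or.inl (by linarith))]
    rw [show c + R - c = R by ring, Real.zero_rpow (by linarith), sub_add_cancel]
    simp
  rw [hleft, hright]
  ring

lemma integral_inv_Icc_right (x₁ d D : ℝ) (hd : 0 < d) (hdD : d ≤ D) :
    ∫ y in Icc (x₁+d) (x₁+D), (y - x₁)⁻¹ = Real.log (D / d) := by
  rw [integral_Icc_eq_integral_Ioc,
    ← intervalIntegral.integral_of_le (by linarith : x₁ + d ≤ x₁ + D)]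
  have : ∀ y ∈ uIcc (x₁+d) (x₁+D), (y - x₁)⁻¹ = (fun u : ℝ => 1/u) (y - x₁) := by
    intro y hy; simp [one_div]
  rw [intervalIntegral.integral_congr this,
    intervalIntegral.integral_comp_sub_right (fun u : ℝ => 1/u) x₁]
  rw [show x₁ + d - x₁ = d by ring, show x₁ + D - x₁ = D by ring]
  apply integral_one_div
  intro hmem
  rw [uIcc_of_le hdD] at hmem
  exact absurd hmem.1 (by linarith)

lemma integral_inv_Icc_left (x₁ d D : ℝ) (hd : 0 < d) (hdD : d ≤ D) :
    ∫ y in Icc (x₁-D) (x₁-d), (x₁ - y)⁻¹ = Real.log (D / d) := by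
  rw [integral_Icc_eq_integral_Ioc,
    ← intervalIntegral.integral_of_le (by linarith : x₁ - D ≤ x₁ - d)]
  have : ∀ y ∈ uIcc (x₁-D) (x₁-d), (x₁ - y)⁻¹ = (fun u : ℝ => 1/u) (x₁ - y) := by
    intro y hy; simp [one_div]
  rw [intervalIntegral.integral_congr this,
    intervalIntegral.integral_comp_sub_left (fun u : ℝ => 1/u) x₁]
  rw [show x₁ - (x₁ - d) = d by ring, show x₁ - (x₁ - D) = D by ring]
  apply integral_one_div
  intro hmem
  rw [uIcc_of_le hdD] at hmem
  exact absurd hmem.1 (by linarith)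
section near
variable {α M a b : ℝ} (hα : 0 < α) (hα1 : α < 1) (hM : 0 ≤ M) (hab : a < b) (k : ℕ)
  (f : ℝ → ℝ) (hf : ContDiffOn ℝ k f (Icc a b))
  (hH : ∀ x ∈ Icc a b, ∀ y ∈ Icc a b,
    |iteratedDerivWithin k f (Icc a b) x - iteratedDerivWithin k f (Icc a b) y|
      ≤ M * |x - y| ^ α)

include hα hα1 hM hab hf hH in
lemma near_bound {x : ℝ} (hx : x ∈ Icc a b) {y : ℝ} (hy : y ∈ Icc a b) :
    |(f y - taylorPolyWithin f (Icc a b) k x y) / (y - x) ^ (k+1)|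
      ≤ M * |y - x| ^ (α - 1) := by
  rcases eq_or_ne y x with rfl | hne
  · simp only [sub_self, abs_zero]
    rw [Real.zero_rpow ((by linarith : α - 1 < 0).ne), zero_pow (Nat.succ_ne_zero k), div_zero,
      abs_zero, mul_zero]
  · have hd : 0 < |y - x| := abs_pos.2 (sub_ne_zero.2 hne)
    rw [abs_div, abs_pow]
    have hnum := remainder_bound hα hM hab k f hf hH x hx y hy
    have hnum2 : |f y - taylorPolyWithin f (Icc a b) k x y| ≤ M * |y - x| ^ ((k:ℝ) + α) :=
      le_trans hnum (div_le_self (by positivity)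
        (by exact_mod_cast Nat.one_le_iff_ne_zero.2 k.factorial_ne_zero))
    calc |f y - taylorPolyWithin f (Icc a b) k x y| / |y - x| ^ (k+1)
        ≤ (M * |y - x| ^ ((k:ℝ) + α)) / |y - x| ^ (k+1) := by gcongr
      _ = M * |y - x| ^ (α - 1) := by
          rw [show |y - x| ^ ((k:ℝ) + α) = |y - x| ^ (α - 1) * |y - x| ^ ((k+1 : ℕ) : ℝ) from by
            rw [← Real.rpow_add hd]; congr 1; push_cast; ring]
          rw [Real.rpow_natCast]
          field_simp

include hα hM hab hf hH hα1 in
lemma integrableOn_F {x : ℝ} (hx : x ∈ Icc a b) :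
    IntegrableOn (fun y => (f y - taylorPolyWithin f (Icc a b) k x y) / (y - x) ^ (k+1))
      (Ioc a b) volume := by
  set F := fun y => (f y - taylorPolyWithin f (Icc a b) k x y) / (y - x) ^ (k+1) with hF
  have hmaj : IntegrableOn (fun y => M * |y - x| ^ (α - 1)) (Ioc a b) volume := by
    apply Integrable.const_mul
    rw [← IntegrableOn, ← intervalIntegrable_iff_integrableOn_Ioc_of_le hab.le]
    exact intervalIntegrable_abs_rpow (by linarith) x a b
  have hmeas : AEStronglyMeasurable F (volume.restrict (Ioc a b)) := by
    have hc : ContinuousOn F (Ioc a b \ {x}) := by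
      apply ContinuousOn.div
      · exact ((hf.continuousOn.mono (fun y hy => mem_Icc_of_Ioc hy.1)).sub
          (continuous_taylorPoly f (Icc a b) k x).continuousOn)
      · fun_prop
      · intro y hy
        exact pow_ne_zero _ (sub_ne_zero.2 hy.2)
    have hms : MeasurableSet (Ioc a b \ {x}) := measurableSet_Ioc.diff (measurableSet_singleton x)
    have h1 : AEStronglyMeasurable F (volume.restrict (Ioc a b \ {x})) :=
      hc.aestronglyMeasurable hms
    have hset : (Ioc a b \ {x} : Set ℝ) =ᵐ[volume] (Ioc a b : Set ℝ) :=
      diff_null_ae_eq_self (measure_singleton x)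
    rwa [Measure.restrict_congr_set hset] at h1
  apply Integrable.mono' hmaj hmeas
  have hx_ae : ∀ᵐ (y : ℝ) ∂(volume.restrict (Ioc a b)), y ∈ Ioc a b := ae_restrict_mem measurableSet_Ioc
  filter_upwards [hx_ae] with y hy
  rw [Real.norm_eq_abs]
  exact near_bound hα hα1 hM hab k f hf hH hx (mem_Icc_of_Ioc hy)
end near
set_option maxHeartbeats 2000000 in
theorem Tk_log_holder (k : ℕ) (α : ℝ) (hα : 0 < α) (hα1 : α < 1) :
    ∃ C > 0, ∀ (a b : ℝ), a < b → ∀ (f : ℝ → ℝ) (M : ℝ), 0 ≤ M →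
      ContDiffOn ℝ k f (Icc a b) →
      (∀ x ∈ Icc a b, ∀ y ∈ Icc a b,
        |iteratedDerivWithin k f (Icc a b) x - iteratedDerivWithin k f (Icc a b) y|
          ≤ M * |x - y| ^ α) →
      (∀ i ≤ k, ∀ x ∈ Icc a b, |iteratedDerivWithin i f (Icc a b) x| ≤ M) →
      ∀ x₁ ∈ Icc a b, ∀ x₂ ∈ Icc a b, x₁ ≠ x₂ →
        |Tk a b k f x₂ - Tk a b k f x₁|
          ≤ C * M * |x₂ - x₁| ^ α * (Real.log ((b - a) / |x₂ - x₁|) + 1) := by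
  refine ⟨(k.factorial : ℝ) * (10 / α + 2 * (((k:ℝ)+1) * 2 ^ (k+3))), by positivity, ?_⟩
  intro a b hab f M hM hf hH _hDb x₁ hx₁ x₂ hx₂ hne
  set h := |x₂ - x₁| with hh_def
  have hh : 0 < h := abs_pos.2 (sub_ne_zero.2 (Ne.symm hne))
  have hhba : h ≤ b - a := by
    rw [hh_def, abs_sub_le_iff]
    constructor <;> [linarith [hx₁.1, hx₂.2]; linarith [hx₂.1, hx₁.2]]
  set L := Real.log ((b-a)/h) with hL_def
  have hL0 : 0 ≤ L := Real.log_nonneg (by rw [le_div_iff₀ hh]; linarith)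
  set F₁ : ℝ → ℝ := fun y => (f y - taylorPolyWithin f (Icc a b) k x₁ y) / (y - x₁) ^ (k+1)
    with hF₁def
  set F₂ : ℝ → ℝ := fun y => (f y - taylorPolyWithin f (Icc a b) k x₂ y) / (y - x₂) ^ (k+1)
    with hF₂def
  have hF₁ : IntegrableOn F₁ (Ioc a b) volume :=
    integrableOn_F hα hα1 hM hab k f hf hH hx₁
  have hF₂ : IntegrableOn F₂ (Ioc a b) volume :=
    integrableOn_F hα hα1 hM hab k f hf hH hx₂
  have hTk : Tk a b k f x₂ - Tk a b k f x₁
      = (k.factorial : ℝ) * ∫ y in Ioc a b, (F₂ y - F₁ y) := by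
    unfold Tk
    rw [intervalIntegral.integral_of_le hab.le, intervalIntegral.integral_of_le hab.le,
      ← mul_sub, ← integral_sub hF₂ hF₁]
  rw [hTk]
  set N := Ioc a b ∩ Ioo (x₁ - 2*h) (x₁ + 2*h) with hN_def
  set Far := Ioc a b \ Ioo (x₁ - 2*h) (x₁ + 2*h) with hFar_def
  have hNmeas : MeasurableSet N := measurableSet_Ioc.inter measurableSet_Ioo
  have hFarMeas : MeasurableSet Far := measurableSet_Ioc.diff measurableSet_Ioo
  have hNsub : N ⊆ Ioc a b := inter_subset_left
  have hFarSub : Far ⊆ Ioc a b := diff_subset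
  have hsplit : ∫ y in Ioc a b, (F₂ y - F₁ y)
      = (∫ y in N, (F₂ y - F₁ y)) + ∫ y in Far, (F₂ y - F₁ y) :=
    (integral_inter_add_diff measurableSet_Ioo (hF₂.sub hF₁)).symm
  -- majorant integrability
  have hmaj : ∀ c : ℝ, IntegrableOn (fun y => M * |y - c| ^ (α-1)) (Ioc a b) volume := by
    intro c
    apply Integrable.const_mul
    rw [← IntegrableOn, ← intervalIntegrable_iff_integrableOn_Ioc_of_le hab.le]
    exact intervalIntegrable_abs_rpow (by linarith) c a b
  -- near field: F₁
  have hN1 : ∫ y in N, |F₁ y| ≤ M * (2 * (2*h)^α / α) := by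
    have hmaj2 : IntegrableOn (fun y => M * |y - x₁| ^ (α-1))
        (Ioc (x₁ - 2*h) (x₁ + 2*h)) volume := by
      rw [← intervalIntegrable_iff_integrableOn_Ioc_of_le (by linarith : x₁ - 2*h ≤ x₁ + 2*h)]
      exact (intervalIntegrable_abs_rpow (by linarith) x₁ _ _).const_mul M
    calc ∫ y in N, |F₁ y| ≤ ∫ y in N, M * |y - x₁| ^ (α-1) := by
          apply setIntegral_mono_on (IntegrableOn.mono_set hF₁.norm hNsub)
            ((hmaj x₁).mono_set hNsub) hNmeas
          intro y hy
          exact near_bound hα hα1 hM hab k f hf hH hx₁ (mem_Icc_of_Ioc (hNsub hy))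
      _ ≤ ∫ y in Ioc (x₁ - 2*h) (x₁ + 2*h), M * |y - x₁| ^ (α-1) := by
          apply setIntegral_mono_set hmaj2
          · filter_upwards with y
            positivity
          · apply HasSubset.Subset.eventuallyLE
            intro y hy
            exact Ioo_subset_Ioc_self hy.2
      _ = M * (2 * (2*h)^α / α) := by
          rw [MeasureTheory.integral_const_mul,
            integral_abs_rpow_Ioc hα x₁ (2*h) (by linarith)]
  -- near field: F₂
  have hN2 : ∫ y in N, |F₂ y| ≤ M * (2 * (3*h)^α / α) := by
    have hmaj2 : IntegrableOn (fun y => M * |y - x₂| ^ (α-1))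
        (Ioc (x₂ - 3*h) (x₂ + 3*h)) volume := by
      rw [← intervalIntegrable_iff_integrableOn_Ioc_of_le (by linarith : x₂ - 3*h ≤ x₂ + 3*h)]
      exact (intervalIntegrable_abs_rpow (by linarith) x₂ _ _).const_mul M
    calc ∫ y in N, |F₂ y| ≤ ∫ y in N, M * |y - x₂| ^ (α-1) := by
          apply setIntegral_mono_on (IntegrableOn.mono_set hF₂.norm hNsub)
            ((hmaj x₂).mono_set hNsub) hNmeas
          intro y hy
          exact near_bound hα hα1 hM hab k f hf hH hx₂ (mem_Icc_of_Ioc (hNsub hy))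
      _ ≤ ∫ y in Ioc (x₂ - 3*h) (x₂ + 3*h), M * |y - x₂| ^ (α-1) := by
          apply setIntegral_mono_set hmaj2
          · filter_upwards with y
            positivity
          · apply HasSubset.Subset.eventuallyLE
            intro y hy
            have h1 : |y - x₁| < 2*h := by
              rw [abs_lt]
              exact ⟨by linarith [hy.2.1], by linarith [hy.2.2]⟩
            have h2 : |y - x₂| < 3*h := by
              calc |y - x₂| ≤ |y - x₁| + |x₁ - x₂| := abs_sub_le _ _ _
                _ = |y - x₁| + h := by rw [abs_sub_comm x₁ x₂, ← hh_def]
                _ < 3*h := by linarith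
            rw [abs_lt] at h2
            exact ⟨by linarith [h2.1], by linarith [h2.2]⟩
      _ = M * (2 * (3*h)^α / α) := by
          rw [MeasureTheory.integral_const_mul, integral_abs_rpow_Ioc hα x₂ (3*h) (by linarith)]
  -- far field
  set Cst := ((k:ℝ)+1) * 2^(k+3) * M * h^α with hCst_def
  have hCst0 : 0 ≤ Cst := by rw [hCst_def]; positivity
  set G : ℝ → ℝ := fun y => Cst * |y - x₁|⁻¹ with hG_def
  set IccL := Icc (x₁-(b-a)) (x₁-2*h) with hIccL_def
  set IccR := Icc (x₁+2*h) (x₁+(b-a)) with hIccR_def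
  have hGcontL : IntegrableOn G IccL volume := by
    apply ContinuousOn.integrableOn_Icc
    apply ContinuousOn.mul continuousOn_const
    apply ContinuousOn.inv₀ (by fun_prop)
    intro y hy
    have hy' : x₁-(b-a) ≤ y ∧ y ≤ x₁-2*h := by simpa [hIccL_def, mem_Icc] using hy
    rw [abs_ne_zero]
    exact (by linarith [hy'.2] : y - x₁ < 0).ne
  have hGcontR : IntegrableOn G IccR volume := by
    apply ContinuousOn.integrableOn_Icc
    apply ContinuousOn.mul continuousOn_const
    apply ContinuousOn.inv₀ (by fun_prop)
    intro y hy
    have hy' : x₁+2*h ≤ y ∧ y ≤ x₁+(b-a) := by simpa [hIccR_def, mem_Icc] using hy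
    rw [abs_ne_zero]
    exact (by linarith [hy'.1] : 0 < y - x₁).ne'
  have hGint : IntegrableOn G (IccL ∪ IccR) volume := hGcontL.union hGcontR
  have hFarIcc : Far ⊆ IccL ∪ IccR := by
    intro y hy
    obtain ⟨hy1, hy2⟩ := hy
    rw [mem_Ioo, not_and_or, not_lt, not_lt] at hy2
    rcases hy2 with h1 | h1
    · left
      rw [hIccL_def, mem_Icc]
      exact ⟨by linarith [hy1.1, hx₁.2], by linarith⟩
    · right
      rw [hIccR_def, mem_Icc]
      exact ⟨h1, by linarith [hy1.2, hx₁.1]⟩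
  have hGbound : ∀ y ∈ Far, |F₂ y - F₁ y| ≤ G y := by
    intro y hy
    have hyIcc : y ∈ Icc a b := mem_Icc_of_Ioc hy.1
    have hfar2 : 2 * |x₂ - x₁| ≤ |y - x₁| := by
      have hy2 := hy.2
      rw [mem_Ioo, not_and_or, not_lt, not_lt] at hy2
      rw [← hh_def]
      rcases hy2 with h1 | h1
      · rw [abs_of_nonpos (by linarith : y - x₁ ≤ 0)]
        linarith
      · rw [abs_of_nonneg (by linarith : 0 ≤ y - x₁)]
        linarith
    have hfb := far_bound hα hα1.le hM hab k f hf hH hx₁ hx₂ hne hyIcc hfar2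
    calc |F₂ y - F₁ y| ≤ ((k:ℝ)+1) * 2^(k+3) * M * |x₂-x₁|^α / |y - x₁| := hfb
      _ = G y := by rw [hG_def, hCst_def, hh_def, div_eq_mul_inv]
  have hGnonneg : ∀ y : ℝ, 0 ≤ G y := by
    intro y
    rw [hG_def]
    have : 0 ≤ |y - x₁|⁻¹ := by positivity
    exact mul_nonneg hCst0 this
  have hIR : ∫ y in IccR, G y ≤ Cst * L := by
    rcases le_or_gt (2*h) (b-a) with hcase | hcase
    · have heval : ∫ y in IccR, G y = Cst * Real.log ((b-a)/(2*h)) := by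
        rw [hG_def, MeasureTheory.integral_const_mul]
        congr 1
        rw [setIntegral_congr_fun measurableSet_Icc
          (fun y hy => by
            have hy' : x₁+2*h ≤ y ∧ y ≤ x₁+(b-a) := by simpa [hIccR_def, mem_Icc] using hy
            show |y - x₁|⁻¹ = (y - x₁)⁻¹
            rw [abs_of_pos (by linarith [hy'.1] : 0 < y - x₁)])]
        exact integral_inv_Icc_right x₁ (2*h) (b-a) (by linarith) hcase
      rw [heval]
      apply mul_le_mul_of_nonneg_left ?_ hCst0
      rw [hL_def]
      apply Real.log_le_log (by apply div_pos <;> linarith)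
      gcongr
      · linarith
    · have hempty : IccR = ∅ := by
        rw [hIccR_def]
        exact Icc_eq_empty (by intro hc; linarith)
      rw [hempty, Measure.restrict_empty, MeasureTheory.integral_zero_measure]
      exact mul_nonneg hCst0 hL0
  have hIL : ∫ y in IccL, G y ≤ Cst * L := by
    rcases le_or_gt (2*h) (b-a) with hcase | hcase
    · have heval : ∫ y in IccL, G y = Cst * Real.log ((b-a)/(2*h)) := by
        rw [hG_def, MeasureTheory.integral_const_mul]
        congr 1
        rw [setIntegral_congr_fun measurableSet_Icc
          (fun y hy => by
            have hy' : x₁-(b-a) ≤ y ∧ y ≤ x₁-2*h := by simpa [hIccL_def, mem_Icc] using hy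
            show |y - x₁|⁻¹ = (x₁ - y)⁻¹
            rw [abs_of_nonpos (by linarith [hy'.2] : y - x₁ ≤ 0), neg_sub])]
        exact integral_inv_Icc_left x₁ (2*h) (b-a) (by linarith) hcase
      rw [heval]
      apply mul_le_mul_of_nonneg_left ?_ hCst0
      rw [hL_def]
      apply Real.log_le_log (by apply div_pos <;> linarith)
      gcongr
      · linarith
    · have hempty : IccL = ∅ := by
        rw [hIccL_def]
        exact Icc_eq_empty (by intro hc; linarith)
      rw [hempty, Measure.restrict_empty, MeasureTheory.integral_zero_measure]
      exact mul_nonneg hCst0 hL0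
  have hdisj : Disjoint IccL IccR := by
    rw [Set.disjoint_left]
    intro y hyL hyR
    rw [hIccL_def, mem_Icc] at hyL
    rw [hIccR_def, mem_Icc] at hyR
    linarith [hyL.2, hyR.1]
  have hFarEst : ∫ y in Far, |F₂ y - F₁ y| ≤ Cst * (2 * L) := by
    calc ∫ y in Far, |F₂ y - F₁ y| ≤ ∫ y in Far, G y := by
          apply setIntegral_mono_on
            (IntegrableOn.mono_set (hF₂.sub hF₁).norm hFarSub)
            (hGint.mono_set hFarIcc) hFarMeas hGbound
      _ ≤ ∫ y in IccL ∪ IccR, G y := by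
          apply setIntegral_mono_set hGint
          · filter_upwards with y using hGnonneg y
          · exact HasSubset.Subset.eventuallyLE hFarIcc
      _ = (∫ y in IccL, G y) + ∫ y in IccR, G y :=
          setIntegral_union hdisj measurableSet_Icc
            (hGint.mono_set subset_union_left) (hGint.mono_set subset_union_right)
      _ ≤ Cst * L + Cst * L := add_le_add hIL hIR
      _ = Cst * (2 * L) := by ring
  -- near combination
  have hNEst : |∫ y in N, (F₂ y - F₁ y)| ≤ M * (2 * (3*h)^α / α) + M * (2 * (2*h)^α / α) := by
    calc |∫ y in N, (F₂ y - F₁ y)| ≤ ∫ y in N, |F₂ y - F₁ y| := by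
          simpa [Real.norm_eq_abs] using
            MeasureTheory.norm_integral_le_integral_norm (μ := volume.restrict N)
              (f := fun y => F₂ y - F₁ y)
      _ ≤ ∫ y in N, (|F₂ y| + |F₁ y|) := by
          apply setIntegral_mono_on
            (IntegrableOn.mono_set (hF₂.sub hF₁).norm hNsub)
            (((IntegrableOn.mono_set hF₂.norm hNsub)).add
              ((IntegrableOn.mono_set hF₁.norm hNsub))) hNmeas
          intro y _
          exact abs_sub _ _
      _ = (∫ y in N, |F₂ y|) + ∫ y in N, |F₁ y| :=
          MeasureTheory.integral_add
            (IntegrableOn.mono_set hF₂.norm hNsub)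
            (IntegrableOn.mono_set hF₁.norm hNsub)
      _ ≤ M * (2 * (3*h)^α / α) + M * (2 * (2*h)^α / α) := add_le_add hN2 hN1
  have hFarEst2 : |∫ y in Far, (F₂ y - F₁ y)| ≤ Cst * (2 * L) := by
    calc |∫ y in Far, (F₂ y - F₁ y)| ≤ ∫ y in Far, |F₂ y - F₁ y| := by
          simpa [Real.norm_eq_abs] using
            MeasureTheory.norm_integral_le_integral_norm (μ := volume.restrict Far)
              (f := fun y => F₂ y - F₁ y)
      _ ≤ Cst * (2 * L) := hFarEst
  -- final numeric assembly
  rw [hsplit]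
  have hS : |(∫ y in N, (F₂ y - F₁ y)) + ∫ y in Far, (F₂ y - F₁ y)|
      ≤ (M * (2 * (3*h)^α / α) + M * (2 * (2*h)^α / α)) + Cst * (2 * L) := by
    calc |(∫ y in N, (F₂ y - F₁ y)) + ∫ y in Far, (F₂ y - F₁ y)|
        ≤ |∫ y in N, (F₂ y - F₁ y)| + |∫ y in Far, (F₂ y - F₁ y)| := abs_add_le _ _
      _ ≤ _ := add_le_add hNEst hFarEst2
  have hha : 0 ≤ h ^ α := Real.rpow_nonneg hh.le _
  have h3a : (3*h)^α ≤ 3 * h^α := by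
    rw [Real.mul_rpow (by norm_num) hh.le]
    have : (3:ℝ)^α ≤ 3 := by
      have := Real.rpow_le_rpow_of_exponent_le (by norm_num : (1:ℝ) ≤ 3) hα1.le
      rwa [Real.rpow_one] at this
    apply mul_le_mul_of_nonneg_right this hha
  have h2a : (2*h)^α ≤ 2 * h^α := by
    rw [Real.mul_rpow (by norm_num) hh.le]
    have : (2:ℝ)^α ≤ 2 := by
      have := Real.rpow_le_rpow_of_exponent_le (by norm_num : (1:ℝ) ≤ 2) hα1.le
      rwa [Real.rpow_one] at this
    apply mul_le_mul_of_nonneg_right this hha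
  have hfact0 : (0:ℝ) ≤ (k.factorial : ℝ) := by positivity
  calc |(k.factorial : ℝ) * ((∫ y in N, (F₂ y - F₁ y)) + ∫ y in Far, (F₂ y - F₁ y))|
      = (k.factorial : ℝ) * |(∫ y in N, (F₂ y - F₁ y)) + ∫ y in Far, (F₂ y - F₁ y)| := by
        rw [abs_mul, abs_of_nonneg hfact0]
    _ ≤ (k.factorial : ℝ) * ((M * (2 * (3*h)^α / α) + M * (2 * (2*h)^α / α)) + Cst * (2 * L)) :=
        mul_le_mul_of_nonneg_left hS hfact0
    _ ≤ (k.factorial : ℝ) * ((10 * (M * h^α) / α) + (2 * (((k:ℝ)+1) * 2^(k+3))) * (M * h^α) * L) := by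
        apply mul_le_mul_of_nonneg_left ?_ hfact0
        rw [hCst_def]
        have e1 : M * (2 * (3*h)^α / α) ≤ 6 * (M * h^α) / α := by
          rw [show M * (2 * (3*h)^α / α) = (2*M*(3*h)^α)/α from by ring]
          apply (div_le_div_iff_of_pos_right hα).mpr
          nlinarith [mul_le_mul_of_nonneg_left h3a (by positivity : (0:ℝ) ≤ 2*M)]
        have e2 : M * (2 * (2*h)^α / α) ≤ 4 * (M * h^α) / α := by
          rw [show M * (2 * (2*h)^α / α) = (2*M*(2*h)^α)/α from by ring]
          apply (div_le_div_iff_of_pos_right hα).mpr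
          nlinarith [mul_le_mul_of_nonneg_left h2a (by positivity : (0:ℝ) ≤ 2*M)]
        have e4 : (((k:ℝ)+1) * 2^(k+3) * M * h^α) * (2 * L)
            = (2 * (((k:ℝ)+1) * 2^(k+3))) * (M * h^α) * L := by ring
        have e5 : 6 * (M * h^α) / α + 4 * (M * h^α) / α = 10 * (M * h^α) / α := by ring
        linarith [e1, e2, e4, e5]
    _ ≤ (k.factorial : ℝ) * (10 / α + 2 * (((k:ℝ)+1) * 2 ^ (k+3))) * M * h ^ α * (L + 1) := by
        have expand : (k.factorial:ℝ) * (10 / α + 2 * (((k:ℝ)+1) * 2 ^ (k+3))) * M * h ^ α * (L + 1)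
            = (k.factorial:ℝ) * ((10 * (M * h^α) / α) + (2 * (((k:ℝ)+1) * 2^(k+3))) * (M * h^α) * L)
              + (k.factorial:ℝ) * ((10 * (M * h^α) * L / α) + (2 * (((k:ℝ)+1) * 2^(k+3))) * (M * h^α)) := by
          field_simp
          ring
        have hr : 0 ≤ (k.factorial:ℝ)
            * ((10 * (M * h^α) * L / α) + (2 * (((k:ℝ)+1) * 2^(k+3))) * (M * h^α)) := by
          apply mul_nonneg hfact0
          apply add_nonneg
          · apply div_nonneg _ hα.le
            exact mul_nonneg (mul_nonneg (by norm_num) (mul_nonneg hM hha)) hL0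
          · positivity
        linarith [expand, hr]
end

section
/- For |x| < 1, the principal value integral p.v. ∫_{-1}^1 1/(√(1-t²)(x-t)) dt equals 0. -/
open Set Filter intervalIntegral

namespace PVaux

noncomputable def N (x t : ℝ) : ℝ :=
  1 - x * t + Real.sqrt (1 - x ^ 2) * Real.sqrt (1 - t ^ 2)

noncomputable def F (x t : ℝ) : ℝ :=
  (Real.sqrt (1 - x ^ 2))⁻¹ * Real.log (N x t / (x - t))

lemma c_pos {x : ℝ} (hx : |x| < 1) : 0 < Real.sqrt (1 - x ^ 2) := by
  apply Real.sqrt_pos.mpr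
  obtain ⟨h1, h2⟩ := abs_lt.mp hx
  nlinarith

lemma N_pos {x t : ℝ} (hx : |x| < 1) (ht : |t| ≤ 1) : 0 < N x t := by
  have h1 : x * t ≤ |x * t| := le_abs_self _
  have h2 : |x * t| < 1 := by
    rw [abs_mul]
    calc |x| * |t| ≤ |x| * 1 := mul_le_mul_of_nonneg_left ht (abs_nonneg x)
    _ = |x| := mul_one _
    _ < 1 := hx
  have h3 : 0 ≤ Real.sqrt (1 - x ^ 2) * Real.sqrt (1 - t ^ 2) := by positivity
  unfold N; nlinarith

lemma N_cont (x : ℝ) : Continuous (N x) := by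
  unfold N; fun_prop

lemma F_deriv {x t : ℝ} (hx : |x| < 1) (ht : t ∈ Ioo (-1 : ℝ) 1) (htx : t ≠ x) :
    HasDerivAt (F x) (1 / (Real.sqrt (1 - t ^ 2) * (x - t))) t := by
  obtain ⟨ht1, ht2⟩ := ht
  have ht2' : 0 < 1 - t ^ 2 := by nlinarith
  have hc : 0 < Real.sqrt (1 - x ^ 2) := c_pos hx
  have hc2 : Real.sqrt (1 - x ^ 2) ^ 2 = 1 - x ^ 2 := Real.sq_sqrt (by
    obtain ⟨h1, h2⟩ := abs_lt.mp hx; nlinarith)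
  have hs : 0 < Real.sqrt (1 - t ^ 2) := Real.sqrt_pos.mpr ht2'
  have hs2 : Real.sqrt (1 - t ^ 2) ^ 2 = 1 - t ^ 2 := Real.sq_sqrt ht2'.le
  set c := Real.sqrt (1 - x ^ 2) with hcdef
  set s := Real.sqrt (1 - t ^ 2) with hsdef
  have hxt : x - t ≠ 0 := sub_ne_zero.mpr (Ne.symm htx)
  have hN : 0 < N x t := N_pos hx (abs_le.mpr ⟨ht1.le, ht2.le⟩)
  have hq : HasDerivAt (fun u : ℝ => 1 - u ^ 2) (-(2 * t)) t := by
    simpa using (hasDerivAt_pow 2 t).const_sub 1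
  have hsqrt : HasDerivAt (fun u : ℝ => Real.sqrt (1 - u ^ 2)) (-(2 * t) / (2 * s)) t :=
    hq.sqrt ht2'.ne'
  have hNd : HasDerivAt (N x) (-x + c * (-(2 * t) / (2 * s))) t := by
    have h1 : HasDerivAt (fun u : ℝ => 1 - x * u) (-x) t := by
      simpa using ((hasDerivAt_id t).const_mul x).const_sub 1
    exact h1.add (hsqrt.const_mul c)
  have hden : HasDerivAt (fun u : ℝ => x - u) (-1) t := by
    simpa using (hasDerivAt_id t).const_sub x
  have hgd : HasDerivAt (fun u => N x u / (x - u))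
      (((-x + c * (-(2 * t) / (2 * s))) * (x - t) - N x t * (-1)) / (x - t) ^ 2) t :=
    hNd.div hden hxt
  have hg0 : N x t / (x - t) ≠ 0 := div_ne_zero hN.ne' hxt
  have hlog := (hgd.log hg0).const_mul c⁻¹
  have hNe : N x t = 1 - x * t + c * s := rfl
  have hEq : c⁻¹ * (((-x + c * (-(2 * t) / (2 * s))) * (x - t) - N x t * (-1)) / (x - t) ^ 2 /
      (N x t / (x - t))) = 1 / (s * (x - t)) := by
    have hN0 : (1 : ℝ) - x * t + c * s ≠ 0 := by rw [← hNe]; exact hN.ne'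
    rw [hNe]
    field_simp
    ring_nf
    linear_combination c * hs2 - s * hc2
  rw [← hEq]
  exact hlog

lemma F_contOn {x : ℝ} (hx : |x| < 1) {A B : ℝ} (hA : -1 ≤ A) (hB : B ≤ 1)
    (hAB : ∀ t ∈ Icc A B, x - t ≠ 0) : ContinuousOn (F x) (Icc A B) := by
  unfold F
  apply continuousOn_const.mul
  apply ContinuousOn.log
  · exact ((N_cont x).continuousOn).div (by fun_prop) hAB
  · intro t ht
    have htm : |t| ≤ 1 := abs_le.mpr ⟨hA.trans ht.1, ht.2.trans hB⟩
    exact div_ne_zero (N_pos hx htm).ne' (hAB t ht)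

lemma F_neg_one {x : ℝ} (hx : |x| < 1) : F x (-1) = 0 := by
  have h1 : (-1 : ℝ) < x := (abs_lt.mp hx).1
  have hN : N x (-1) = 1 + x := by norm_num [N]
  unfold F
  rw [hN, show x - (-1) = x + 1 from by ring,
    show (1 + x) / (x + 1) = 1 from by rw [add_comm]; exact div_self (by linarith),
    Real.log_one, mul_zero]

lemma F_one {x : ℝ} (hx : |x| < 1) : F x 1 = 0 := by
  have h2 : x < 1 := (abs_lt.mp hx).2
  have hN : N x 1 = 1 - x := by norm_num [N]
  unfold F
  rw [hN, show (1 - x) / (x - 1) = -1 from by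
      rw [div_eq_iff (sub_ne_zero.mpr h2.ne)]; ring,
    show (-1 : ℝ) = -(1 : ℝ) from rfl, Real.log_neg_eq_log, Real.log_one, mul_zero]

lemma integrable_left {x : ℝ} (hx : |x| < 1) {ε : ℝ} (hε : 0 < ε) (ha : -1 < x - ε) :
    IntervalIntegrable (fun t => 1 / (Real.sqrt (1 - t ^ 2) * (x - t)))
      MeasureTheory.volume (-1) (x - ε) := by
  obtain ⟨hx1, hx2⟩ := abs_lt.mp hx
  have hK : (0 : ℝ) < Real.sqrt (1 - x) * ε :=
    mul_pos (Real.sqrt_pos.mpr (by linarith)) hε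
  have hmaj : IntervalIntegrable
      (fun t => (Real.sqrt (1 - x) * ε)⁻¹ * (1 + t) ^ (-(1/2) : ℝ))
      MeasureTheory.volume (-1) (x - ε) := by
    have h0 : IntervalIntegrable (fun u : ℝ => u ^ (-(1/2) : ℝ)) MeasureTheory.volume
        (-1 + 1) (x - ε + 1) := intervalIntegrable_rpow' (by norm_num)
    have h1 := (h0.comp_add_right 1).const_mul (Real.sqrt (1 - x) * ε)⁻¹
    simpa [add_comm] using h1
  apply hmaj.mono_fun
  · apply Measurable.aestronglyMeasurable
    apply Measurable.div measurable_const
    exact ((Real.continuous_sqrt.comp (by fun_prop)).measurable).mul (by fun_prop)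
  · filter_upwards [MeasureTheory.ae_restrict_mem measurableSet_uIoc] with t ht
    rw [uIoc_of_le (by linarith : (-1:ℝ) ≤ x - ε)] at ht
    obtain ⟨ht1, ht2⟩ := ht
    have h1t : (0 : ℝ) < 1 + t := by linarith
    have h2t : (0 : ℝ) < 1 - t := by linarith
    have hxt : ε ≤ x - t := by linarith
    have hxt0 : (0 : ℝ) < x - t := lt_of_lt_of_le hε hxt
    have hsq : Real.sqrt (1 - t ^ 2) = Real.sqrt (1 + t) * Real.sqrt (1 - t) := by
      rw [← Real.sqrt_mul h1t.le]; ring_nf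
    have hrpow : (1 + t) ^ (-(1/2) : ℝ) = (Real.sqrt (1 + t))⁻¹ := by
      rw [Real.rpow_neg h1t.le, ← Real.sqrt_eq_rpow]
    have hs1 : (0 : ℝ) < Real.sqrt (1 + t) := Real.sqrt_pos.mpr h1t
    have hs2 : (0 : ℝ) < Real.sqrt (1 - t) := Real.sqrt_pos.mpr h2t
    have hA : (0 : ℝ) < Real.sqrt (1 + t) * Real.sqrt (1 - t) * (x - t) := by positivity
    have hB : (0 : ℝ) < Real.sqrt (1 - x) * ε * Real.sqrt (1 + t) := by positivity
    have key : Real.sqrt (1 - x) * ε * Real.sqrt (1 + t)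
        ≤ Real.sqrt (1 + t) * Real.sqrt (1 - t) * (x - t) := by
      have h5 : Real.sqrt (1 - x) ≤ Real.sqrt (1 - t) := Real.sqrt_le_sqrt (by linarith)
      have h6 : Real.sqrt (1 - x) * ε ≤ Real.sqrt (1 - t) * (x - t) :=
        mul_le_mul h5 hxt hε.le (Real.sqrt_nonneg _)
      calc Real.sqrt (1 - x) * ε * Real.sqrt (1 + t)
          = Real.sqrt (1 + t) * (Real.sqrt (1 - x) * ε) := by ring
        _ ≤ Real.sqrt (1 + t) * (Real.sqrt (1 - t) * (x - t)) :=
            mul_le_mul_of_nonneg_left h6 (Real.sqrt_nonneg _)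
        _ = Real.sqrt (1 + t) * Real.sqrt (1 - t) * (x - t) := by ring
    rw [Real.norm_eq_abs, Real.norm_eq_abs, hsq, hrpow,
      abs_of_pos (div_pos one_pos hA),
      abs_of_pos (mul_pos (inv_pos.mpr hK) (inv_pos.mpr hs1)), ← mul_inv, ← one_div]
    exact one_div_le_one_div_of_le hB key

lemma integrable_right {x : ℝ} (hx : |x| < 1) {ε : ℝ} (hε : 0 < ε) (hb : x + ε < 1) :
    IntervalIntegrable (fun t => 1 / (Real.sqrt (1 - t ^ 2) * (x - t)))
      MeasureTheory.volume (x + ε) 1 := by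
  obtain ⟨hx1, hx2⟩ := abs_lt.mp hx
  have hK : (0 : ℝ) < Real.sqrt (1 + x) * ε :=
    mul_pos (Real.sqrt_pos.mpr (by linarith)) hε
  have hmaj : IntervalIntegrable
      (fun t => (Real.sqrt (1 + x) * ε)⁻¹ * (1 - t) ^ (-(1/2) : ℝ))
      MeasureTheory.volume (x + ε) 1 := by
    have h0 : IntervalIntegrable (fun u : ℝ => u ^ (-(1/2) : ℝ)) MeasureTheory.volume
        (1 - (x + ε)) (1 - 1) := intervalIntegrable_rpow' (by norm_num)
    have h1 := (h0.comp_sub_left 1).const_mul (Real.sqrt (1 + x) * ε)⁻¹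
    simpa using h1
  apply hmaj.mono_fun
  · apply Measurable.aestronglyMeasurable
    apply Measurable.div measurable_const
    exact ((Real.continuous_sqrt.comp (by fun_prop)).measurable).mul (by fun_prop)
  · filter_upwards [MeasureTheory.ae_restrict_mem measurableSet_uIoc] with t ht
    rw [uIoc_of_le (by linarith : x + ε ≤ 1)] at ht
    obtain ⟨ht1, ht2⟩ := ht
    rcases eq_or_lt_of_le ht2 with h1 | ht2'
    · rw [h1]
      norm_num [Real.zero_rpow (by norm_num : (-(1/2) : ℝ) ≠ 0)]
    have h1t : (0 : ℝ) < 1 + t := by linarith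
    have h2t : (0 : ℝ) < 1 - t := by linarith
    have hxt : ε ≤ t - x := by linarith
    have hxt0 : (0 : ℝ) < t - x := lt_of_lt_of_le hε hxt
    have hsq : Real.sqrt (1 - t ^ 2) = Real.sqrt (1 + t) * Real.sqrt (1 - t) := by
      rw [← Real.sqrt_mul h1t.le]; ring_nf
    have hrpow : (1 - t) ^ (-(1/2) : ℝ) = (Real.sqrt (1 - t))⁻¹ := by
      rw [Real.rpow_neg h2t.le, ← Real.sqrt_eq_rpow]
    have hs1 : (0 : ℝ) < Real.sqrt (1 + t) := Real.sqrt_pos.mpr h1t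
    have hs2 : (0 : ℝ) < Real.sqrt (1 - t) := Real.sqrt_pos.mpr h2t
    have habs : |1 / (Real.sqrt (1 - t ^ 2) * (x - t))|
        = 1 / (Real.sqrt (1 + t) * Real.sqrt (1 - t) * (t - x)) := by
      rw [abs_div, abs_mul, hsq, abs_mul, abs_of_pos hs1, abs_of_pos hs2,
        abs_of_neg (by linarith : x - t < 0), abs_one]
      ring_nf
    have hA : (0 : ℝ) < Real.sqrt (1 + t) * Real.sqrt (1 - t) * (t - x) := by positivity
    have hB : (0 : ℝ) < Real.sqrt (1 + x) * ε * Real.sqrt (1 - t) := by positivity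
    have key : Real.sqrt (1 + x) * ε * Real.sqrt (1 - t)
        ≤ Real.sqrt (1 + t) * Real.sqrt (1 - t) * (t - x) := by
      have h5 : Real.sqrt (1 + x) ≤ Real.sqrt (1 + t) := Real.sqrt_le_sqrt (by linarith)
      have h6 : Real.sqrt (1 + x) * ε ≤ Real.sqrt (1 + t) * (t - x) :=
        mul_le_mul h5 hxt hε.le (Real.sqrt_nonneg _)
      calc Real.sqrt (1 + x) * ε * Real.sqrt (1 - t)
          = Real.sqrt (1 - t) * (Real.sqrt (1 + x) * ε) := by ring
        _ ≤ Real.sqrt (1 - t) * (Real.sqrt (1 + t) * (t - x)) :=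
            mul_le_mul_of_nonneg_left h6 (Real.sqrt_nonneg _)
        _ = Real.sqrt (1 + t) * Real.sqrt (1 - t) * (t - x) := by ring
    rw [Real.norm_eq_abs, Real.norm_eq_abs, habs, hrpow,
      abs_of_pos (mul_pos (inv_pos.mpr hK) (inv_pos.mpr hs2)), ← mul_inv, ← one_div]
    exact one_div_le_one_div_of_le hB key

end PVaux

theorem pv_integral_zero (x : ℝ) (hx : |x| < 1) :
    Tendsto (fun ε : ℝ =>
        (∫ t in (-1 : ℝ)..(x - ε), 1 / (Real.sqrt (1 - t ^ 2) * (x - t))) +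
        ∫ t in (x + ε)..(1 : ℝ), 1 / (Real.sqrt (1 - t ^ 2) * (x - t)))
      (nhdsWithin 0 (Ioi 0)) (nhds 0) := by
  classical
  obtain ⟨hx1, hx2⟩ := abs_lt.mp hx
  set c := Real.sqrt (1 - x ^ 2) with hcdef
  have hc : 0 < c := PVaux.c_pos hx
  set G : ℝ → ℝ := fun ε =>
    c⁻¹ * (Real.log (PVaux.N x (x - ε)) - Real.log (PVaux.N x (x + ε))) with hGdef
  have hδ : (0 : ℝ) < min (1 + x) (1 - x) := lt_min (by linarith) (by linarith)
  have key : ∀ ε ∈ Ioo (0 : ℝ) (min (1 + x) (1 - x)),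
      (∫ t in (-1 : ℝ)..(x - ε), 1 / (Real.sqrt (1 - t ^ 2) * (x - t))) +
        (∫ t in (x + ε)..(1 : ℝ), 1 / (Real.sqrt (1 - t ^ 2) * (x - t))) = G ε := by
    intro ε hε
    obtain ⟨hε0, hεδ⟩ := hε
    have hεa : ε < 1 + x := lt_of_lt_of_le hεδ (min_le_left _ _)
    have hεb : ε < 1 - x := lt_of_lt_of_le hεδ (min_le_right _ _)
    have ha : -1 < x - ε := by linarith
    have hb : x + ε < 1 := by linarith
    have hNa : 0 < PVaux.N x (x - ε) := PVaux.N_pos hx (abs_le.mpr ⟨by linarith, by linarith⟩)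
    have hNb : 0 < PVaux.N x (x + ε) := PVaux.N_pos hx (abs_le.mpr ⟨by linarith, by linarith⟩)
    have I1 : (∫ t in (-1 : ℝ)..(x - ε), 1 / (Real.sqrt (1 - t ^ 2) * (x - t)))
        = PVaux.F x (x - ε) - PVaux.F x (-1) := by
      apply intervalIntegral.integral_eq_sub_of_hasDeriv_right_of_le (by linarith)
      · exact PVaux.F_contOn hx (le_refl _) (by linarith)
          (fun t ht => by simp only [mem_Icc] at ht; intro h; nlinarith [ht.2])
      · intro t ht
        exact (PVaux.F_deriv hx ⟨ht.1, by linarith [ht.2]⟩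
          (by intro h; rw [h] at ht; linarith [ht.2])).hasDerivWithinAt
      · exact PVaux.integrable_left hx hε0 ha
    have I2 : (∫ t in (x + ε)..(1 : ℝ), 1 / (Real.sqrt (1 - t ^ 2) * (x - t)))
        = PVaux.F x 1 - PVaux.F x (x + ε) := by
      apply intervalIntegral.integral_eq_sub_of_hasDeriv_right_of_le (by linarith)
      · exact PVaux.F_contOn hx (by linarith) (le_refl _)
          (fun t ht => by simp only [mem_Icc] at ht; intro h; nlinarith [ht.1])
      · intro t ht
        exact (PVaux.F_deriv hx ⟨by linarith [ht.1], ht.2⟩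
          (by intro h; rw [h] at ht; linarith [ht.1])).hasDerivWithinAt
      · exact PVaux.integrable_right hx hε0 hb
    rw [I1, I2, PVaux.F_neg_one hx, PVaux.F_one hx]
    have hFa : PVaux.F x (x - ε) = c⁻¹ * (Real.log (PVaux.N x (x - ε)) - Real.log ε) := by
      unfold PVaux.F
      rw [show x - (x - ε) = ε from by ring, Real.log_div hNa.ne' hε0.ne']
    have hFb : PVaux.F x (x + ε) = c⁻¹ * (Real.log (PVaux.N x (x + ε)) - Real.log ε) := by
      unfold PVaux.F
      rw [show x - (x + ε) = -ε from by ring, div_neg, Real.log_neg_eq_log,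
        Real.log_div hNb.ne' hε0.ne']
    rw [hFa, hFb, hGdef]
    ring
  have hNx : 0 < PVaux.N x x := PVaux.N_pos hx (abs_le.mpr ⟨by linarith, by linarith⟩)
  have hGcont : ContinuousAt G 0 := by
    apply ContinuousAt.mul continuousAt_const
    apply ContinuousAt.sub
    · exact ContinuousAt.log (((PVaux.N_cont x).comp
        (continuous_const.sub continuous_id)).continuousAt) (by simpa using hNx.ne')
    · exact ContinuousAt.log (((PVaux.N_cont x).comp
        (continuous_const.add continuous_id)).continuousAt) (by simpa using hNx.ne')
  have hG0 : G 0 = 0 := by simp [hGdef]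
  have hlim : Tendsto G (nhdsWithin 0 (Ioi 0)) (nhds 0) := by
    have h := (hGcont.continuousWithinAt (s := Ioi (0 : ℝ))).tendsto
    rwa [hG0] at h
  apply hlim.congr'
  filter_upwards [Ioo_mem_nhdsGT_of_mem (left_mem_Ico.mpr hδ)] with ε hε
  exact (key ε hε).symm
end
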